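/- arXiv:2212.08642 — 3 statements merged into one kernel-verified Lean document; each statement's English description precedes it below -/
import Mathlib

section
/- Deterministic bound for the linear term. In the setting of the deterministic perturbation framework, additionally let κ > 0 satisfy σ₁(T₁) ≤ κ·λ, let Û₁ ∈ ℝ^{p₁×r₁} have orthonormal columns, let Λ̂ be an invertible r₁×r₁ matrix with smallest singular value at least λ/2, fix m ∈ {1,…,p₁}, and set ξ̃ := ‖e_mᵀ Z₁ P̃ V₁‖₂ and L := (I − U₁U₁ᵀ)·Z₁·P̂·T₁ᵀ·Û₁·Λ̂^{-2}. Then ‖e_mᵀ L‖₂ ≤ (8κ/λ)·‖U₁‖_{2,∞}·(τ₁·η + ‖U₁ᵀZ₁V₁‖) + (8κ/λ)·τ₁·η̃ + (4κ/λ)·ξ̃. -/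
open Matrix
open scoped BigOperators Kronecker

noncomputable section

/-- Euclidean norm of a finitely-indexed real vector. -/
def enorm2 {n : Type*} [Fintype n] (v : n → ℝ) : ℝ := Real.sqrt (∑ i, (v i) ^ 2)

/-- `‖M‖_{2,∞}`: largest Euclidean norm of a row of `M`. -/
def twoInf {m n : Type*} [Fintype m] [Fintype n] (M : Matrix m n ℝ) : ℝ :=
  sSup {c | ∃ i, c = enorm2 (M i)}

/-- Spectral norm of a matrix. -/
def spec {m n : Type*} [Fintype m] [Fintype n] (M : Matrix m n ℝ) : ℝ :=
  sSup {c | ∃ v : n → ℝ, enorm2 v ≤ 1 ∧ c = enorm2 (M.mulVec v)}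

/-- `j`-th largest singular value (for `j ≥ 1`), via the Courant–Fischer principle. -/
def sval {m n : Type*} [Fintype m] [Fintype n] (M : Matrix m n ℝ) (j : ℕ) : ℝ :=
  sSup {c | 0 ≤ c ∧ ∃ V : Submodule ℝ (n → ℝ), Module.finrank ℝ V = j ∧
      ∀ v ∈ V, c * enorm2 v ≤ enorm2 (M.mulVec v)}

/-- `M` has orthonormal columns. -/
def OrthoCols {m : Type*} {r : ℕ} [Fintype m] (U : Matrix m (Fin r) ℝ) : Prop :=
  Uᵀ * U = 1

/-- A compact SVD of a rank-`r` matrix. -/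
def IsCompactSVD {m n : Type*} {r : ℕ} [Fintype m] [Fintype n]
    (M : Matrix m n ℝ) (U : Matrix m (Fin r) ℝ) (L : Matrix (Fin r) (Fin r) ℝ)
    (V : Matrix n (Fin r) ℝ) : Prop :=
  OrthoCols U ∧ OrthoCols V ∧ (∀ i j, i ≠ j → L i j = 0) ∧ (∀ i, 0 < L i i) ∧
    M = U * L * Vᵀ

/-- An orthogonal projection matrix. -/
def IsOrthProj {n : Type*} [Fintype n] (P : Matrix n n ℝ) : Prop :=
  Pᵀ = P ∧ P * P = P

/-- `τ₁`: the largest spectral norm of `Z` compressed by a Kronecker product of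
orthogonal projections of ranks at most `2r₂` and `2r₃`. -/
def tauP {p₁ p₂ p₃ : ℕ} (r₂ r₃ : ℕ) (Z : Matrix (Fin p₁) (Fin p₂ × Fin p₃) ℝ) : ℝ :=
  sSup {c | ∃ (P : Matrix (Fin p₂) (Fin p₂) ℝ) (Q : Matrix (Fin p₃) (Fin p₃) ℝ),
    IsOrthProj P ∧ IsOrthProj Q ∧ P.rank ≤ 2 * r₂ ∧ Q.rank ≤ 2 * r₃ ∧
    c = spec (Z * (P ⊗ₖ Q))}

/-- `‖sinΘ(U,V)‖ = ‖(I − UUᵀ)V‖`. -/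
def sinTheta {m : Type*} {r s : ℕ} [Fintype m] [DecidableEq m]
    (U : Matrix m (Fin r) ℝ) (V : Matrix m (Fin s) ℝ) : ℝ :=
  spec ((1 - U * Uᵀ) * V)

/-- `Z'` is obtained from `Z` by setting a subset of its rows to zero. -/
def ZeroRows {m n : Type*} (Z Z' : Matrix m n ℝ) : Prop :=
  ∃ s : Set m, ∀ i, (i ∈ s ∧ ∀ j, Z' i j = 0) ∨ (i ∉ s ∧ ∀ j, Z' i j = Z i j)

/-- `Z'` is obtained from `Z` by setting a subset of its columns to zero. -/
def ZeroCols {m n : Type*} (Z Z' : Matrix m n ℝ) : Prop :=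
  ∃ s : Set n, ∀ j, (j ∈ s ∧ ∀ i, Z' i j = 0) ∨ (j ∉ s ∧ ∀ i, Z' i j = Z i j)

/-- Columns of `U` are orthonormal eigenvectors of the symmetric matrix `A` associated
with its `r` largest eigenvalues (with multiplicity). -/
def IsTopEigvecs {n : Type*} {r : ℕ} [Fintype n] (A : Matrix n n ℝ)
    (U : Matrix n (Fin r) ℝ) : Prop :=
  OrthoCols U ∧ ∃ D : Fin r → ℝ, A * U = U * Matrix.diagonal D ∧
    ∀ (v : n → ℝ) (c : ℝ), v ≠ 0 → A.mulVec v = c • v → Uᵀ.mulVec v = 0 → ∀ j, c ≤ D j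

/-- `U` is a matrix of top-`r` left singular vectors of `M`. -/
def IsTopLeftSingular {m q : Type*} {r : ℕ} [Fintype m] [Fintype q]
    (M : Matrix m q ℝ) (U : Matrix m (Fin r) ℝ) : Prop :=
  IsTopEigvecs (M * Mᵀ) U

namespace S13

variable {m n p q : Type*} [Fintype m] [Fintype n] [Fintype p] [Fintype q]

def EV {n : Type*} [Fintype n] (v : n → ℝ) : EuclideanSpace ℝ n := WithLp.toLp 2 v

lemma enorm2_eq (v : n → ℝ) : enorm2 v = ‖EV v‖ := by
  rw [EuclideanSpace.norm_eq]
  simp [enorm2, EV, sq_abs]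

lemma enorm2_nonneg (v : n → ℝ) : 0 ≤ enorm2 v := Real.sqrt_nonneg _

lemma inner_EV (a b : n → ℝ) : (inner ℝ (EV a) (EV b) : ℝ) = ∑ i, a i * b i := by
  simp [EV, PiLp.inner_apply, RCLike.inner_apply, starRingEnd_apply, mul_comm]

def clm (M : Matrix m n ℝ) : EuclideanSpace ℝ n →L[ℝ] EuclideanSpace ℝ m :=
  ((EuclideanSpace.equiv m ℝ).symm.toContinuousLinearMap.comp
    (LinearMap.toContinuousLinearMap M.mulVecLin)).comp
    (EuclideanSpace.equiv n ℝ).toContinuousLinearMap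

@[simp] lemma clm_apply (M : Matrix m n ℝ) (v : EuclideanSpace ℝ n) :
    clm M v = EV (M.mulVec v) := by
  simp [clm, EV, Matrix.mulVecLin_apply]
  rfl

lemma spec_eq (M : Matrix m n ℝ) : spec M = ‖clm M‖ := by
  rw [← ContinuousLinearMap.sSup_unitClosedBall_eq_norm]
  unfold spec
  congr 1
  ext c
  simp only [Set.mem_setOf_eq, Set.mem_image, Metric.mem_closedBall, dist_zero_right]
  constructor
  · rintro ⟨v, hv, rfl⟩
    refine ⟨EV v, by rwa [← enorm2_eq], ?_⟩
    rw [clm_apply, ← enorm2_eq]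
    rfl
  · rintro ⟨x, hx, rfl⟩
    refine ⟨x, by rw [enorm2_eq]; exact hx, ?_⟩
    rw [clm_apply, ← enorm2_eq]

lemma spec_nonneg (M : Matrix m n ℝ) : 0 ≤ spec M := by rw [spec_eq]; exact norm_nonneg _

lemma enorm2_mulVec_le (M : Matrix m n ℝ) (v : n → ℝ) :
    enorm2 (M.mulVec v) ≤ spec M * enorm2 v := by
  rw [spec_eq, enorm2_eq, enorm2_eq]
  have := (clm M).le_opNorm (EV v)
  rwa [clm_apply] at this

lemma clm_mul (A : Matrix m n ℝ) (B : Matrix p m ℝ) :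
    clm (B * A) = (clm B).comp (clm A) := by
  refine ContinuousLinearMap.ext fun v => ?_
  rw [ContinuousLinearMap.comp_apply, clm_apply, clm_apply, clm_apply]
  show EV ((B * A) *ᵥ v) = EV (B *ᵥ (A *ᵥ v))
  rw [Matrix.mulVec_mulVec]

lemma spec_mul_le (A : Matrix m n ℝ) (B : Matrix p m ℝ) :
    spec (B * A) ≤ spec B * spec A := by
  rw [spec_eq, spec_eq, spec_eq, clm_mul]
  exact ContinuousLinearMap.opNorm_comp_le _ _

lemma spec_le_bound (M : Matrix m n ℝ) {C : ℝ} (hC : 0 ≤ C)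
    (h : ∀ v, enorm2 (M.mulVec v) ≤ C * enorm2 v) : spec M ≤ C := by
  rw [spec_eq]
  refine ContinuousLinearMap.opNorm_le_bound _ hC fun x => ?_
  have := h x
  rw [enorm2_eq (M.mulVec x), enorm2_eq x] at this
  rw [clm_apply]
  exact this

lemma clm_sub (A B : Matrix m n ℝ) : clm (A - B) = clm A - clm B := by
  refine ContinuousLinearMap.ext fun v => ?_
  rw [ContinuousLinearMap.sub_apply, clm_apply, clm_apply, clm_apply, Matrix.sub_mulVec]
  rfl

lemma clm_add (A B : Matrix m n ℝ) : clm (A + B) = clm A + clm B := by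
  refine ContinuousLinearMap.ext fun v => ?_
  rw [ContinuousLinearMap.add_apply, clm_apply, clm_apply, clm_apply, Matrix.add_mulVec]
  rfl

lemma spec_sub_le (A B : Matrix m n ℝ) : spec (A - B) ≤ spec A + spec B := by
  rw [spec_eq, spec_eq, spec_eq, clm_sub]; exact norm_sub_le _ _

lemma spec_add_le (A B : Matrix m n ℝ) : spec (A + B) ≤ spec A + spec B := by
  rw [spec_eq, spec_eq, spec_eq, clm_add]; exact norm_add_le _ _

lemma clm_transpose (M : Matrix m n ℝ) :
    clm Mᵀ = ContinuousLinearMap.adjoint (clm M) := by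
  rw [ContinuousLinearMap.eq_adjoint_iff]
  intro x y
  rw [clm_apply, clm_apply]
  show (inner ℝ (EV (Mᵀ.mulVec x)) (EV y) : ℝ) = (inner ℝ (EV x) (EV (M.mulVec y)) : ℝ)
  rw [inner_EV, inner_EV]
  simp only [Matrix.mulVec, dotProduct, Matrix.transpose_apply,
    Finset.sum_mul, Finset.mul_sum]
  rw [Finset.sum_comm]
  apply Finset.sum_congr rfl
  intro i _
  apply Finset.sum_congr rfl
  intro j _
  ring

lemma spec_transpose (M : Matrix m n ℝ) : spec Mᵀ = spec M := by
  rw [spec_eq, spec_eq, clm_transpose]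
  exact LinearIsometryEquiv.norm_map ContinuousLinearMap.adjoint (clm M)

end S13

set_option linter.dupNamespace false
set_option linter.unusedSectionVars false
namespace S13

variable {m n p q : Type*} [Fintype m] [Fintype n] [Fintype p] [Fintype q]

lemma inner_transpose_move (M : Matrix m n ℝ) (y : m → ℝ) (x : n → ℝ) :
    (inner ℝ (EV (Mᵀ.mulVec y)) (EV x) : ℝ) = inner ℝ (EV y) (EV (M.mulVec x)) := by
  have := ContinuousLinearMap.adjoint_inner_left (clm M) (EV x) (EV y)
  rw [← clm_transpose, clm_apply, clm_apply] at this
  exact this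

lemma sum_sq_eq_inner (v : n → ℝ) : ∑ i, v i ^ 2 = (inner ℝ (EV v) (EV v) : ℝ) := by
  rw [inner_EV]
  exact Finset.sum_congr rfl fun i _ => sq (v i)

lemma enorm2_mulVec_orthonormal {r : ℕ} (U : Matrix m (Fin r) ℝ) (hU : OrthoCols U)
    (x : Fin r → ℝ) : enorm2 (U.mulVec x) = enorm2 x := by
  unfold enorm2
  congr 1
  rw [sum_sq_eq_inner, sum_sq_eq_inner]
  have h1 : (inner ℝ (EV (U.mulVec x)) (EV (U.mulVec x)) : ℝ)
      = inner ℝ (EV (Uᵀ.mulVec (U.mulVec x))) (EV x) := by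
    rw [inner_transpose_move, real_inner_comm]
  rw [real_inner_comm] at h1
  rw [h1, Matrix.mulVec_mulVec, hU, Matrix.one_mulVec]

lemma spec_orthonormal_le_one {r : ℕ} (U : Matrix m (Fin r) ℝ) (hU : OrthoCols U) :
    spec U ≤ 1 := by
  refine spec_le_bound _ zero_le_one fun v => ?_
  rw [enorm2_mulVec_orthonormal U hU, one_mul]

lemma spec_orthonormal_t_le_one {r : ℕ} (U : Matrix m (Fin r) ℝ) (hU : OrthoCols U) :
    spec Uᵀ ≤ 1 := by
  rw [spec_transpose]; exact spec_orthonormal_le_one U hU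

lemma isOrthProj_mul_self_transpose {r : ℕ} (U : Matrix m (Fin r) ℝ) (hU : OrthoCols U) :
    IsOrthProj (U * Uᵀ) := by
  constructor
  · rw [Matrix.transpose_mul, Matrix.transpose_transpose]
  · rw [Matrix.mul_assoc, ← Matrix.mul_assoc Uᵀ, hU, Matrix.one_mul]

lemma spec_orthProj_le_one (P : Matrix n n ℝ) (hP : IsOrthProj P) : spec P ≤ 1 := by
  refine spec_le_bound _ zero_le_one fun v => ?_
  rw [one_mul]
  by_cases h0 : enorm2 (P.mulVec v) = 0
  · rw [h0]; exact enorm2_nonneg v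
  have key : enorm2 (P.mulVec v) ^ 2 ≤ enorm2 v * enorm2 (P.mulVec v) := by
    have h1 : enorm2 (P.mulVec v) ^ 2 = (inner ℝ (EV (P.mulVec v)) (EV (P.mulVec v)) : ℝ) := by
      unfold enorm2
      rw [Real.sq_sqrt (Finset.sum_nonneg fun i _ => sq_nonneg _), sum_sq_eq_inner]
    have h2 : (inner ℝ (EV (P.mulVec v)) (EV (P.mulVec v)) : ℝ)
        = inner ℝ (EV v) (EV (P.mulVec v)) := by
      rw [show (inner ℝ (EV (P.mulVec v)) (EV (P.mulVec v)) : ℝ)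
          = inner ℝ (EV (Pᵀ.mulVec v)) (EV (P.mulVec v)) by rw [hP.1],
        inner_transpose_move, Matrix.mulVec_mulVec, hP.2]
    have h3 : (inner ℝ (EV v) (EV (P.mulVec v)) : ℝ) ≤ enorm2 v * enorm2 (P.mulVec v) := by
      rw [enorm2_eq, enorm2_eq]
      exact real_inner_le_norm _ _
    rw [h1]; rw [h2]; exact h3
  have hpos : 0 < enorm2 (P.mulVec v) := lt_of_le_of_ne (enorm2_nonneg _) (Ne.symm h0)
  nlinarith [key]

variable [DecidableEq m] [DecidableEq n]

lemma row_eq_mulVec (M : Matrix m n ℝ) (i : m) : M i = Mᵀ.mulVec (Pi.single i 1) := by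
  funext j
  simp [Matrix.mulVec, dotProduct, Pi.single_apply, mul_comm]

lemma enorm2_single (i : m) : enorm2 (Pi.single i 1 : m → ℝ) = 1 := by
  unfold enorm2
  rw [show ∑ j, (Pi.single i 1 : m → ℝ) j ^ 2 = 1 by
    rw [Finset.sum_eq_single i] <;> simp +contextual [Pi.single_apply]]
  exact Real.sqrt_one

lemma row_le_spec (M : Matrix m n ℝ) (i : m) : enorm2 (M i) ≤ spec M := by
  rw [row_eq_mulVec M i]
  calc enorm2 (Mᵀ.mulVec (Pi.single i 1)) ≤ spec Mᵀ * enorm2 (Pi.single i 1 : m → ℝ) :=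
        enorm2_mulVec_le _ _
    _ = spec M := by rw [spec_transpose, enorm2_single, mul_one]

lemma row_mul (A : Matrix m n ℝ) (B : Matrix n p ℝ) (i : m) :
    (A * B) i = Bᵀ.mulVec (A i) := by
  funext j
  simp [Matrix.mul_apply, Matrix.mulVec, dotProduct, mul_comm]

lemma enorm2_row_mul_le (A : Matrix m n ℝ) (B : Matrix n p ℝ) (i : m) :
    enorm2 ((A * B) i) ≤ enorm2 (A i) * spec B := by
  rw [row_mul]
  calc enorm2 (Bᵀ.mulVec (A i)) ≤ spec Bᵀ * enorm2 (A i) := enorm2_mulVec_le _ _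
    _ = enorm2 (A i) * spec B := by rw [spec_transpose, mul_comm]

lemma enorm2_row_sub_le (A B : Matrix m n ℝ) (i : m) :
    enorm2 ((A - B) i) ≤ enorm2 (A i) + enorm2 (B i) := by
  have : (A - B) i = A i - B i := rfl
  rw [this, enorm2_eq, enorm2_eq, enorm2_eq]
  exact norm_sub_le (EV (A i)) (EV (B i))

lemma enorm2_row_add_le (A B : Matrix m n ℝ) (i : m) :
    enorm2 ((A + B) i) ≤ enorm2 (A i) + enorm2 (B i) := by
  have : (A + B) i = A i + B i := rfl
  rw [this, enorm2_eq, enorm2_eq, enorm2_eq]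
  exact norm_add_le (EV (A i)) (EV (B i))

end S13


namespace S13

variable {m n p q : Type*} [Fintype m] [Fintype n] [Fintype p] [Fintype q]

lemma enorm2_le_of_sq_le {v : n → ℝ} {c : ℝ} (hc : 0 ≤ c) (h : ∑ i, v i ^ 2 ≤ c ^ 2) :
    enorm2 v ≤ c := by
  unfold enorm2
  rw [show c = Real.sqrt (c ^ 2) by rw [Real.sqrt_sq hc]]
  exact Real.sqrt_le_sqrt h

lemma sq_enorm2 (v : n → ℝ) : enorm2 v ^ 2 = ∑ i, v i ^ 2 := by
  unfold enorm2
  exact Real.sq_sqrt (Finset.sum_nonneg fun i _ => sq_nonneg _)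

lemma sum_sq_mulVec_le (M : Matrix m n ℝ) (v : n → ℝ) :
    ∑ i, (M.mulVec v) i ^ 2 ≤ spec M ^ 2 * ∑ j, v j ^ 2 := by
  have h := enorm2_mulVec_le M v
  have h2 : enorm2 (M.mulVec v) ^ 2 ≤ (spec M * enorm2 v) ^ 2 := by
    apply pow_le_pow_left₀ (enorm2_nonneg _) h
  rw [sq_enorm2, mul_pow, sq_enorm2] at h2
  exact h2

lemma mul_entry_mulVec_col (A : Matrix m n ℝ) (X : Matrix n q ℝ) (i : m) (j : q) :
    (A * X) i j = (A.mulVec fun k => X k j) i := by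
  simp [Matrix.mul_apply, Matrix.mulVec, dotProduct]

lemma mul_entry_mulVec_row (X : Matrix m n ℝ) (B : Matrix q n ℝ) (i : m) (j : q) :
    (X * Bᵀ) i j = (B.mulVec (X i)) j := by
  simp [Matrix.mul_apply, Matrix.mulVec, dotProduct, mul_comm]

lemma frobSq_mul_left (A : Matrix m n ℝ) (X : Matrix n q ℝ) :
    ∑ i, ∑ j, (A * X) i j ^ 2 ≤ spec A ^ 2 * ∑ k, ∑ j, X k j ^ 2 := by
  rw [Finset.sum_comm]
  rw [show (∑ k, ∑ j, X k j ^ 2) = ∑ j, ∑ k, X k j ^ 2 from Finset.sum_comm]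
  rw [Finset.mul_sum]
  apply Finset.sum_le_sum
  intro j _
  calc ∑ i, (A * X) i j ^ 2 = ∑ i, (A.mulVec fun k => X k j) i ^ 2 := by
        apply Finset.sum_congr rfl; intro i _; rw [mul_entry_mulVec_col]
    _ ≤ spec A ^ 2 * ∑ k, X k j ^ 2 := sum_sq_mulVec_le _ _

lemma frobSq_mul_right (X : Matrix m n ℝ) (B : Matrix q n ℝ) :
    ∑ i, ∑ j, (X * Bᵀ) i j ^ 2 ≤ spec B ^ 2 * ∑ i, ∑ k, X i k ^ 2 := by
  rw [Finset.mul_sum]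
  apply Finset.sum_le_sum
  intro i _
  calc ∑ j, (X * Bᵀ) i j ^ 2 = ∑ j, (B.mulVec (X i)) j ^ 2 := by
        apply Finset.sum_congr rfl; intro j _; rw [mul_entry_mulVec_row]
    _ ≤ spec B ^ 2 * ∑ k, X i k ^ 2 := sum_sq_mulVec_le _ _

lemma kron_mulVec (A : Matrix m p ℝ) (B : Matrix n q ℝ) (v : p × q → ℝ) (i : m) (j : n) :
    ((A ⊗ₖ B).mulVec v) (i, j) = (A * Matrix.of (fun k l => v (k, l)) * Bᵀ) i j := by
  rw [Matrix.mul_assoc]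
  simp only [Matrix.mulVec, dotProduct, Matrix.mul_apply, Matrix.transpose_apply,
    Matrix.kroneckerMap_apply, Matrix.of_apply]
  rw [← Finset.univ_product_univ, Finset.sum_product]
  apply Finset.sum_congr rfl
  intro k _
  rw [Finset.mul_sum]
  apply Finset.sum_congr rfl
  intro l _
  ring

lemma spec_kron_le (A : Matrix m p ℝ) (B : Matrix n q ℝ) :
    spec (A ⊗ₖ B) ≤ spec A * spec B := by
  refine spec_le_bound _ (mul_nonneg (spec_nonneg _) (spec_nonneg _)) fun v => ?_
  refine enorm2_le_of_sq_le
    (mul_nonneg (mul_nonneg (spec_nonneg _) (spec_nonneg _)) (enorm2_nonneg _)) ?_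
  set X : Matrix p q ℝ := Matrix.of (fun k l => v (k, l)) with hX
  have e1 : ∑ ij : m × n, ((A ⊗ₖ B).mulVec v) ij ^ 2
      = ∑ i, ∑ j, (A * X * Bᵀ) i j ^ 2 := by
    rw [← Finset.univ_product_univ, Finset.sum_product]
    exact Finset.sum_congr rfl fun i _ => Finset.sum_congr rfl fun j _ => by
      rw [kron_mulVec]
  have e2 : ∑ k, ∑ l, X k l ^ 2 = enorm2 v ^ 2 := by
    rw [sq_enorm2, ← Finset.univ_product_univ, Finset.sum_product]
    rfl
  calc ∑ ij : m × n, ((A ⊗ₖ B).mulVec v) ij ^ 2 = ∑ i, ∑ j, (A * X * Bᵀ) i j ^ 2 := e1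
    _ ≤ spec A ^ 2 * ∑ k, ∑ j, (X * Bᵀ) k j ^ 2 := by
        rw [Matrix.mul_assoc]
        exact frobSq_mul_left A (X * Bᵀ)
    _ ≤ spec A ^ 2 * (spec B ^ 2 * ∑ i, ∑ k, X i k ^ 2) := by
        apply mul_le_mul_of_nonneg_left (frobSq_mul_right X B) (sq_nonneg _)
    _ = (spec A * spec B * enorm2 v) ^ 2 := by rw [e2]; ring

end S13


namespace S13

variable {m n : Type*} [Fintype m] [Fintype n]

lemma le_of_sq_le' {a b : ℝ} (ha : 0 ≤ a) (hb : 0 ≤ b) (h : a ^ 2 ≤ b ^ 2) : a ≤ b := by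
  nlinarith

lemma le_spec (M : Matrix m n ℝ) {v : n → ℝ} (hv : enorm2 v ≤ 1) :
    enorm2 (M.mulVec v) ≤ spec M := by
  rw [spec_eq, enorm2_eq]
  calc ‖EV (M.mulVec v)‖ = ‖clm M (EV v)‖ := rfl
    _ ≤ ‖clm M‖ * ‖EV v‖ := (clm M).le_opNorm _
    _ ≤ ‖clm M‖ * 1 := by
        apply mul_le_mul_of_nonneg_left _ (norm_nonneg _)
        rwa [← enorm2_eq]
    _ = ‖clm M‖ := mul_one _

lemma enorm2_smul (c : ℝ) (v : n → ℝ) : enorm2 (c • v) = |c| * enorm2 v := by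
  rw [enorm2_eq v, enorm2_eq]
  show ‖c • EV v‖ = |c| * ‖EV v‖
  rw [norm_smul, Real.norm_eq_abs]

lemma enorm2_pos {v : n → ℝ} (hv : v ≠ 0) : 0 < enorm2 v := by
  rw [enorm2_eq]
  rw [norm_pos_iff]
  exact fun h => hv (congrArg WithLp.ofLp h)

/-- smallest singular value (as inf over the unit sphere). -/
def smin {r : ℕ} (A : Matrix (Fin r) (Fin r) ℝ) : ℝ :=
  sInf {c | ∃ x : Fin r → ℝ, enorm2 x = 1 ∧ c = enorm2 (A.mulVec x)}

lemma smin_nonneg {r : ℕ} (A : Matrix (Fin r) (Fin r) ℝ) : 0 ≤ smin A :=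
  Real.sInf_nonneg fun _ h => h.choose_spec.2 ▸ enorm2_nonneg _

lemma smin_bddBelow {r : ℕ} (A : Matrix (Fin r) (Fin r) ℝ) :
    BddBelow {c | ∃ x : Fin r → ℝ, enorm2 x = 1 ∧ c = enorm2 (A.mulVec x)} :=
  ⟨0, fun _ h => h.choose_spec.2 ▸ enorm2_nonneg _⟩

lemma smin_le {r : ℕ} (A : Matrix (Fin r) (Fin r) ℝ) {x : Fin r → ℝ} (hx : enorm2 x = 1) :
    smin A ≤ enorm2 (A.mulVec x) :=
  csInf_le (smin_bddBelow A) ⟨x, hx, rfl⟩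

lemma smin_mulVec_le {r : ℕ} (A : Matrix (Fin r) (Fin r) ℝ) (x : Fin r → ℝ) :
    smin A * enorm2 x ≤ enorm2 (A.mulVec x) := by
  by_cases hx : x = 0
  · subst hx
    have h1 : enorm2 (0 : Fin r → ℝ) = 0 := by
      simp [enorm2]
    rw [Matrix.mulVec_zero, h1, mul_zero]
  · have hpos := enorm2_pos hx
    set u := (enorm2 x)⁻¹ • x with hu
    have hu1 : enorm2 u = 1 := by
      rw [hu, enorm2_smul, abs_of_nonneg (inv_nonneg.mpr hpos.le), inv_mul_cancel₀ hpos.ne']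
    have h2 := smin_le A hu1
    rw [hu, Matrix.mulVec_smul, enorm2_smul, abs_of_nonneg (inv_nonneg.mpr hpos.le)] at h2
    calc smin A * enorm2 x ≤ ((enorm2 x)⁻¹ * enorm2 (A.mulVec x)) * enorm2 x := by
          apply mul_le_mul_of_nonneg_right h2 hpos.le
      _ = enorm2 (A.mulVec x) := by field_simp

lemma smin_eq_zero_of_det {r : ℕ} (A : Matrix (Fin r) (Fin r) ℝ) (h : A.det = 0) :
    smin A = 0 := by
  obtain ⟨v, hv0, hv⟩ := (Matrix.exists_mulVec_eq_zero_iff).mpr h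
  have hpos := enorm2_pos hv0
  have hu1 : enorm2 ((enorm2 v)⁻¹ • v) = 1 := by
    rw [enorm2_smul, abs_of_nonneg (inv_nonneg.mpr hpos.le), inv_mul_cancel₀ hpos.ne']
  have h0 : (0 : ℝ) ∈ {c | ∃ x : Fin r → ℝ, enorm2 x = 1 ∧ c = enorm2 (A.mulVec x)} := by
    refine ⟨_, hu1, ?_⟩
    rw [Matrix.mulVec_smul, hv, smul_zero]
    simp [enorm2]
  refine le_antisymm (csInf_le (smin_bddBelow A) h0) (smin_nonneg A)

lemma spec_pos_inv {r : ℕ} (hr : 0 < r) (A : Matrix (Fin r) (Fin r) ℝ) (hA : IsUnit A.det) :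
    0 < spec A⁻¹ := by
  rcases lt_or_eq_of_le (spec_nonneg A⁻¹) with h | h
  · exact h
  exfalso
  set e : Fin r → ℝ := Pi.single ⟨0, hr⟩ 1 with he
  have h1 : enorm2 e = 1 := enorm2_single _
  have h2 : e = A⁻¹.mulVec (A.mulVec e) := by
    rw [Matrix.mulVec_mulVec, Matrix.nonsing_inv_mul A hA, Matrix.one_mulVec]
  have h3 := enorm2_mulVec_le A⁻¹ (A.mulVec e)
  rw [← h2, h1, ← h, zero_mul] at h3
  linarith

lemma smin_inv_eq {r : ℕ} (hr : 0 < r) (A : Matrix (Fin r) (Fin r) ℝ) (hA : IsUnit A.det) :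
    smin A = 1 / spec A⁻¹ := by
  have hs := spec_pos_inv hr A hA
  have hlow : 1 / spec A⁻¹ ≤ smin A := by
    refine le_csInf ⟨enorm2 (A.mulVec (Pi.single ⟨0, hr⟩ 1)), Pi.single ⟨0, hr⟩ 1,
      enorm2_single _, rfl⟩ ?_
    rintro c ⟨x, hx, rfl⟩
    have h2 : x = A⁻¹.mulVec (A.mulVec x) := by
      rw [Matrix.mulVec_mulVec, Matrix.nonsing_inv_mul A hA, Matrix.one_mulVec]
    have h3 := enorm2_mulVec_le A⁻¹ (A.mulVec x)
    rw [← h2, hx] at h3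
    rw [div_le_iff₀ hs, mul_comm]
    exact h3
  have hsminpos : 0 < smin A := lt_of_lt_of_le (by positivity) hlow
  have hup : spec A⁻¹ ≤ 1 / smin A := by
    refine spec_le_bound _ (by positivity) fun v => ?_
    have h4 := smin_mulVec_le A (A⁻¹.mulVec v)
    rw [Matrix.mulVec_mulVec, Matrix.mul_nonsing_inv A hA, Matrix.one_mulVec] at h4
    rw [one_div]
    rw [mul_comm, ← div_eq_mul_inv, le_div_iff₀ hsminpos, mul_comm]
    exact h4
  have hup' : spec A⁻¹ * smin A ≤ 1 := (le_div_iff₀ hsminpos).mp hup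
  apply le_antisymm _ hlow
  rw [le_div_iff₀ hs]
  calc smin A * spec A⁻¹ = spec A⁻¹ * smin A := mul_comm _ _
    _ ≤ 1 := hup'

lemma smin_transpose {r : ℕ} (A : Matrix (Fin r) (Fin r) ℝ) : smin Aᵀ = smin A := by
  rcases Nat.eq_zero_or_pos r with hr | hr
  · subst hr
    have : ∀ B : Matrix (Fin 0) (Fin 0) ℝ, smin B = 0 := by
      intro B
      unfold smin
      have he : {c | ∃ x : Fin 0 → ℝ, enorm2 x = 1 ∧ c = enorm2 (B.mulVec x)} = ∅ := by
        ext c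
        simp only [Set.mem_setOf_eq, Set.mem_empty_iff_false, iff_false]
        rintro ⟨x, hx, -⟩
        have hx0 : enorm2 x = 0 := by simp [enorm2]
        rw [hx0] at hx
        norm_num at hx
      rw [he]
      exact Real.sInf_empty
    rw [this, this]
  by_cases hA : IsUnit A.det
  · have hAT : IsUnit Aᵀ.det := by rwa [Matrix.det_transpose]
    rw [smin_inv_eq hr A hA, smin_inv_eq hr Aᵀ hAT, ← Matrix.transpose_nonsing_inv,
      spec_transpose]
  · have h0 : A.det = 0 := by
      by_contra h
      exact hA (isUnit_iff_ne_zero.mpr h)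
    have h0T : Aᵀ.det = 0 := by rwa [Matrix.det_transpose]
    rw [smin_eq_zero_of_det A h0, smin_eq_zero_of_det Aᵀ h0T]

end S13


namespace S13

variable {m n : Type*} [Fintype m] [Fintype n]

lemma EV_sub (a b : n → ℝ) : EV (a - b) = EV a - EV b := rfl

lemma spec_cols_fin_zero (M : Matrix m (Fin 0) ℝ) : spec M = 0 := by
  unfold spec
  have hz : ∀ v : Fin 0 → ℝ, M.mulVec v = 0 := by
    intro v
    funext i
    simp [Matrix.mulVec, dotProduct]
  have he : {c | ∃ v : Fin 0 → ℝ, enorm2 v ≤ 1 ∧ c = enorm2 (M.mulVec v)} = {0} := by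
    ext c
    simp only [Set.mem_setOf_eq, Set.mem_singleton_iff]
    constructor
    · rintro ⟨v, hv, rfl⟩
      rw [hz]
      simp [enorm2]
    · rintro rfl
      exact ⟨0, by simp [enorm2], by rw [hz]; simp [enorm2]⟩
  rw [he, csSup_singleton]

lemma pyth {r : ℕ} [DecidableEq m] (U V : Matrix m (Fin r) ℝ) (hU : OrthoCols U)
    (hV : OrthoCols V) (x : Fin r → ℝ) :
    enorm2 (((1 - V * Vᵀ) * U).mulVec x) ^ 2
      = enorm2 x ^ 2 - enorm2 ((Vᵀ * U).mulVec x) ^ 2 := by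
  have hM : (1 - V * Vᵀ) * U = U - V * (Vᵀ * U) := by
    rw [Matrix.sub_mul, Matrix.one_mul, Matrix.mul_assoc]
  set y := U.mulVec x with hy
  set w := (Vᵀ * U).mulVec x with hw
  have hMx : ((1 - V * Vᵀ) * U).mulVec x = y - V.mulVec w := by
    rw [hM, Matrix.sub_mulVec, hy, hw, ← Matrix.mulVec_mulVec]
  rw [hMx]
  have h1 : enorm2 (y - V.mulVec w) ^ 2
      = enorm2 y ^ 2 - 2 * (inner ℝ (EV y) (EV (V.mulVec w)) : ℝ) + enorm2 (V.mulVec w) ^ 2 := by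
    rw [enorm2_eq, EV_sub, enorm2_eq y, enorm2_eq (V.mulVec w)]
    exact norm_sub_sq_real _ _
  have h2 : (inner ℝ (EV y) (EV (V.mulVec w)) : ℝ) = enorm2 w ^ 2 := by
    rw [← inner_transpose_move]
    have : Vᵀ.mulVec y = w := by
      rw [hy, Matrix.mulVec_mulVec, hw]
    rw [this]
    rw [enorm2_eq]
    exact real_inner_self_eq_norm_sq _
  have h3 : enorm2 (V.mulVec w) = enorm2 w := enorm2_mulVec_orthonormal V hV w
  have h4 : enorm2 y = enorm2 x := enorm2_mulVec_orthonormal U hU x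
  rw [h1, h2, h3, h4]
  ring

lemma smin_le_one {r : ℕ} (U V : Matrix m (Fin r) ℝ) (hU : OrthoCols U) (hV : OrthoCols V)
    (hr : 0 < r) : smin (Vᵀ * U) ≤ 1 := by
  have h1 := smin_le (Vᵀ * U) (enorm2_single (⟨0, hr⟩ : Fin r))
  refine h1.trans ?_
  rw [← Matrix.mulVec_mulVec]
  calc enorm2 (Vᵀ.mulVec (U.mulVec (Pi.single ⟨0, hr⟩ 1)))
      ≤ spec Vᵀ * enorm2 (U.mulVec (Pi.single ⟨0, hr⟩ 1)) := enorm2_mulVec_le _ _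
    _ = spec Vᵀ * 1 := by rw [enorm2_mulVec_orthonormal U hU, enorm2_single]
    _ ≤ 1 := by rw [mul_one]; exact spec_orthonormal_t_le_one V hV

lemma spec_sin_eq {r : ℕ} [DecidableEq m] (U V : Matrix m (Fin r) ℝ) (hU : OrthoCols U)
    (hV : OrthoCols V) (hr : 0 < r) :
    spec ((1 - V * Vᵀ) * U) = Real.sqrt (1 - smin (Vᵀ * U) ^ 2) := by
  set A := Vᵀ * U with hA
  set s := smin A with hs
  have hs0 : 0 ≤ s := smin_nonneg A
  have hs1 : s ≤ 1 := smin_le_one U V hU hV hr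
  have h1ms : 0 ≤ 1 - s ^ 2 := by nlinarith
  apply le_antisymm
  · refine spec_le_bound _ (Real.sqrt_nonneg _) fun v => ?_
    refine le_of_sq_le' (enorm2_nonneg _)
      (mul_nonneg (Real.sqrt_nonneg _) (enorm2_nonneg _)) ?_
    rw [pyth U V hU hV v, mul_pow, Real.sq_sqrt h1ms]
    have h5 := smin_mulVec_le A v
    have h6 : (s * enorm2 v) ^ 2 ≤ enorm2 (A.mulVec v) ^ 2 :=
      pow_le_pow_left₀ (mul_nonneg hs0 (enorm2_nonneg _)) h5 2
    nlinarith [enorm2_nonneg v]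
  · set σ := spec ((1 - V * Vᵀ) * U) with hσ
    have hσ0 : 0 ≤ σ := spec_nonneg _
    have key : ∀ x : Fin r → ℝ, enorm2 x = 1 → Real.sqrt (1 - σ ^ 2) ≤ enorm2 (A.mulVec x) := by
      intro x hx
      have h7 : enorm2 (((1 - V * Vᵀ) * U).mulVec x) ≤ σ := le_spec _ hx.le
      have h8 : enorm2 (((1 - V * Vᵀ) * U).mulVec x) ^ 2 ≤ σ ^ 2 :=
        pow_le_pow_left₀ (enorm2_nonneg _) h7 2
      rw [pyth U V hU hV x, hx] at h8
      have h9 : 1 - σ ^ 2 ≤ enorm2 (A.mulVec x) ^ 2 := by nlinarith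
      calc Real.sqrt (1 - σ ^ 2) ≤ Real.sqrt (enorm2 (A.mulVec x) ^ 2) := Real.sqrt_le_sqrt h9
        _ = enorm2 (A.mulVec x) := Real.sqrt_sq (enorm2_nonneg _)
    have hsmin : Real.sqrt (1 - σ ^ 2) ≤ s := by
      refine le_csInf ⟨enorm2 (A.mulVec (Pi.single ⟨0, hr⟩ 1)), Pi.single ⟨0, hr⟩ 1,
        enorm2_single _, rfl⟩ ?_
      rintro c ⟨x, hx, rfl⟩
      exact key x hx
    by_cases hcase : 1 - σ ^ 2 ≤ 0
    · calc Real.sqrt (1 - s ^ 2) ≤ Real.sqrt 1 := Real.sqrt_le_sqrt (by nlinarith)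
        _ = 1 := Real.sqrt_one
        _ ≤ σ := by nlinarith
    · push_neg at hcase
      have h10 : (Real.sqrt (1 - σ ^ 2)) ^ 2 ≤ s ^ 2 :=
        pow_le_pow_left₀ (Real.sqrt_nonneg _) hsmin 2
      rw [Real.sq_sqrt hcase.le] at h10
      have h11 : 1 - s ^ 2 ≤ σ ^ 2 := by nlinarith
      calc Real.sqrt (1 - s ^ 2) ≤ Real.sqrt (σ ^ 2) := Real.sqrt_le_sqrt h11
        _ = σ := Real.sqrt_sq hσ0

lemma spec_proj_sym {r : ℕ} [DecidableEq m] (U V : Matrix m (Fin r) ℝ)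
    (hU : OrthoCols U) (hV : OrthoCols V) :
    spec ((1 - U * Uᵀ) * V) = spec ((1 - V * Vᵀ) * U) := by
  rcases Nat.eq_zero_or_pos r with hr | hr
  · subst hr
    rw [spec_cols_fin_zero, spec_cols_fin_zero]
  rw [spec_sin_eq V U hV hU hr, spec_sin_eq U V hU hV hr]
  have : Uᵀ * V = (Vᵀ * U)ᵀ := by
    rw [Matrix.transpose_mul, Matrix.transpose_transpose]
  rw [this, smin_transpose]

end S13


namespace S13

variable {m : Type*} [Fintype m] [DecidableEq m]

lemma mulVec_single_col {r : ℕ} (A : Matrix m (Fin r) ℝ) (j : Fin r) :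
    A.mulVec (Pi.single j 1) = fun i => A i j := by
  funext i
  simp [Matrix.mulVec, dotProduct, Pi.single_apply]

lemma exists_proj_pair {r s : ℕ} (A : Matrix m (Fin r) ℝ) (B : Matrix m (Fin s) ℝ) :
    ∃ W : Matrix m m ℝ, IsOrthProj W ∧ W.rank ≤ r + s ∧ W * A = A ∧ W * B = B := by
  classical
  set K : Submodule ℝ (EuclideanSpace ℝ m) :=
    LinearMap.range (clm A).toLinearMap ⊔ LinearMap.range (clm B).toLinearMap with hK
  set d := Module.finrank ℝ K with hd
  set b := stdOrthonormalBasis ℝ K with hb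
  set C : Matrix m (Fin d) ℝ := Matrix.of (fun i a => ((b a : K) : EuclideanSpace ℝ m) i) with hC
  have hCortho : OrthoCols C := by
    unfold OrthoCols
    funext a a'
    have horth := (stdOrthonormalBasis ℝ K).orthonormal
    rw [orthonormal_iff_ite] at horth
    have := horth a a'
    rw [Submodule.coe_inner] at this
    rw [Matrix.mul_apply, Matrix.one_apply]
    rw [← this]
    rw [show (inner ℝ ((b a : K) : EuclideanSpace ℝ m) ((b a' : K) : EuclideanSpace ℝ m) : ℝ)
        = ∑ i, ((b a : K) : EuclideanSpace ℝ m) i * ((b a' : K) : EuclideanSpace ℝ m) i from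
      inner_EV _ _]
    apply Finset.sum_congr rfl
    intro i _
    rw [hC]
    simp [Matrix.transpose_apply]
  set W : Matrix m m ℝ := C * Cᵀ with hW
  have hfix : ∀ x : EuclideanSpace ℝ m, x ∈ K → W.mulVec x = x := by
    intro x hx
    have hrepr := (stdOrthonormalBasis ℝ K).sum_repr' (⟨x, hx⟩ : K)
    have hcoe : ∑ a, (inner ℝ ((b a : K) : EuclideanSpace ℝ m) x : ℝ) • ((b a : K) : EuclideanSpace ℝ m) = x := by
      have h := congrArg (Subtype.val) hrepr
      push_cast at h
      conv_rhs => rw [← h]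
      apply Finset.sum_congr rfl
      intro a _
      congr 1
    funext i
    have hWx : W.mulVec x i = ∑ a, (inner ℝ ((b a : K) : EuclideanSpace ℝ m) x : ℝ) * ((b a : K) : EuclideanSpace ℝ m) i := by
      rw [hW, ← Matrix.mulVec_mulVec]
      have hCt : Cᵀ.mulVec x = fun a => (inner ℝ ((b a : K) : EuclideanSpace ℝ m) x : ℝ) := by
        funext a
        rw [show (inner ℝ ((b a : K) : EuclideanSpace ℝ m) x : ℝ)
            = ∑ i, ((b a : K) : EuclideanSpace ℝ m) i * x i from inner_EV _ _]
        simp [Matrix.mulVec, dotProduct, hC]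
      rw [hCt]
      simp [Matrix.mulVec, dotProduct, hC, mul_comm]
      rfl
    rw [hWx]
    have := congrFun (congrArg WithLp.ofLp hcoe) i
    rw [← this]
    rw [WithLp.ofLp_sum, Finset.sum_apply]
    apply Finset.sum_congr rfl
    intro a _
    rfl
  have hcol : ∀ {t : ℕ} (D : Matrix m (Fin t) ℝ),
      LinearMap.range (clm D).toLinearMap ≤ K → W * D = D := by
    intro t D hle
    have hmem : ∀ j, EV (fun i => D i j) ∈ K := by
      intro j
      apply hle
      rw [LinearMap.mem_range]
      refine ⟨EV (Pi.single j 1), ?_⟩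
      show EV (D.mulVec (Pi.single j 1)) = EV (fun i => D i j)
      rw [mulVec_single_col]
    apply Matrix.ext
    intro i j
    rw [mul_entry_mulVec_col]
    exact congrFun (hfix _ (hmem j)) i
  refine ⟨W, ⟨?_, ?_⟩, ?_, ?_, ?_⟩
  · rw [hW, Matrix.transpose_mul, Matrix.transpose_transpose]
  · exact (isOrthProj_mul_self_transpose C hCortho).2
  · calc W.rank ≤ C.rank := Matrix.rank_mul_le_left C Cᵀ
      _ ≤ Fintype.card (Fin d) := Matrix.rank_le_card_width C
      _ = d := Fintype.card_fin d
      _ ≤ r + s := by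
          rw [hd, hK]
          calc Module.finrank ℝ
                ↥(LinearMap.range (clm A).toLinearMap ⊔ LinearMap.range (clm B).toLinearMap)
              ≤ Module.finrank ℝ (LinearMap.range (clm A).toLinearMap)
                + Module.finrank ℝ (LinearMap.range (clm B).toLinearMap) :=
                Submodule.finrank_add_le_finrank_add_finrank _ _
            _ ≤ r + s := by
                apply add_le_add
                · have h1 := LinearMap.finrank_range_le (clm A).toLinearMap
                  rwa [finrank_euclideanSpace_fin] at h1
                · have h1 := LinearMap.finrank_range_le (clm B).toLinearMap
                  rwa [finrank_euclideanSpace_fin] at h1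
  · exact hcol A le_sup_left
  · exact hcol B le_sup_right

end S13


namespace S13

variable {m n p q : Type*} [Fintype m] [Fintype n] [Fintype p] [Fintype q]

lemma spec_zero : spec (0 : Matrix m n ℝ) = 0 := by
  apply le_antisymm
  · refine spec_le_bound _ le_rfl fun v => ?_
    rw [Matrix.zero_mulVec, zero_mul]
    simp [enorm2]
  · exact spec_nonneg _

lemma sub_kronecker (A B : Matrix m n ℝ) (C : Matrix p q ℝ) :
    (A - B) ⊗ₖ C = A ⊗ₖ C - B ⊗ₖ C := by
  apply Matrix.ext
  rintro ⟨i, j⟩ ⟨k, l⟩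
  simp [Matrix.kroneckerMap_apply, Matrix.sub_apply, sub_mul]

lemma kronecker_sub (A : Matrix m n ℝ) (B C : Matrix p q ℝ) :
    A ⊗ₖ (B - C) = A ⊗ₖ B - A ⊗ₖ C := by
  apply Matrix.ext
  rintro ⟨i, j⟩ ⟨k, l⟩
  simp [Matrix.kroneckerMap_apply, Matrix.sub_apply, mul_sub]

section Tau

variable {p₁ p₂ p₃ r₂ r₃ : ℕ} (Z : Matrix (Fin p₁) (Fin p₂ × Fin p₃) ℝ)

lemma tau_elem_le {c : ℝ}
    (hc : c ∈ {c | ∃ (P : Matrix (Fin p₂) (Fin p₂) ℝ) (Q : Matrix (Fin p₃) (Fin p₃) ℝ),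
      IsOrthProj P ∧ IsOrthProj Q ∧ P.rank ≤ 2 * r₂ ∧ Q.rank ≤ 2 * r₃ ∧
      c = spec (Z * (P ⊗ₖ Q))}) : c ≤ spec Z := by
  obtain ⟨P, Q, hP, hQ, -, -, rfl⟩ := hc
  calc spec (Z * (P ⊗ₖ Q)) ≤ spec Z * spec (P ⊗ₖ Q) := spec_mul_le _ _
    _ ≤ spec Z * (spec P * spec Q) :=
        mul_le_mul_of_nonneg_left (spec_kron_le _ _) (spec_nonneg _)
    _ ≤ spec Z * 1 := by
        apply mul_le_mul_of_nonneg_left _ (spec_nonneg _)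
        exact mul_le_one₀ (spec_orthProj_le_one P hP) (spec_nonneg _) (spec_orthProj_le_one Q hQ)
    _ = spec Z := mul_one _

lemma tau_bddAbove : BddAbove {c | ∃ (P : Matrix (Fin p₂) (Fin p₂) ℝ)
    (Q : Matrix (Fin p₃) (Fin p₃) ℝ),
    IsOrthProj P ∧ IsOrthProj Q ∧ P.rank ≤ 2 * r₂ ∧ Q.rank ≤ 2 * r₃ ∧
    c = spec (Z * (P ⊗ₖ Q))} :=
  ⟨spec Z, fun _ hc => tau_elem_le Z hc⟩

lemma tau_mem_le (P : Matrix (Fin p₂) (Fin p₂) ℝ) (Q : Matrix (Fin p₃) (Fin p₃) ℝ)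
    (hP : IsOrthProj P) (hQ : IsOrthProj Q) (hrP : P.rank ≤ 2 * r₂) (hrQ : Q.rank ≤ 2 * r₃) :
    spec (Z * (P ⊗ₖ Q)) ≤ tauP r₂ r₃ Z :=
  le_csSup (tau_bddAbove Z) ⟨P, Q, hP, hQ, hrP, hrQ, rfl⟩

lemma isOrthProj_zero : IsOrthProj (0 : Matrix n n ℝ) := by
  constructor
  · exact Matrix.transpose_zero
  · exact Matrix.mul_zero 0

lemma tau_nonneg : 0 ≤ tauP r₂ r₃ Z := by
  have hr2 : (0 : Matrix (Fin p₂) (Fin p₂) ℝ).rank ≤ 2 * r₂ := by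
    rw [Matrix.rank_zero]; exact Nat.zero_le _
  have hr3 : (0 : Matrix (Fin p₃) (Fin p₃) ℝ).rank ≤ 2 * r₃ := by
    rw [Matrix.rank_zero]; exact Nat.zero_le _
  have h := tau_mem_le Z 0 0 isOrthProj_zero isOrthProj_zero hr2 hr3
  rw [Matrix.zero_kronecker, Matrix.mul_zero, spec_zero] at h
  exact h

end Tau

end S13


namespace S13

variable {m : Type*} [Fintype m] [DecidableEq m]

lemma spec_sub_proj_le {r s : ℕ} (A : Matrix m (Fin r) ℝ) (B : Matrix m (Fin s) ℝ)
    (hA : OrthoCols A) :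
    spec ((1 - B * Bᵀ) * (A * Aᵀ)) ≤ spec ((1 - B * Bᵀ) * A) := by
  rw [← Matrix.mul_assoc]
  calc spec ((1 - B * Bᵀ) * A * Aᵀ) ≤ spec ((1 - B * Bᵀ) * A) * spec Aᵀ := spec_mul_le _ _
    _ ≤ spec ((1 - B * Bᵀ) * A) * 1 :=
        mul_le_mul_of_nonneg_left (spec_orthonormal_t_le_one A hA) (spec_nonneg _)
    _ = spec ((1 - B * Bᵀ) * A) := mul_one _

lemma spec_proj_one_sub_le {r : ℕ} (A B : Matrix m (Fin r) ℝ)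
    (hA : OrthoCols A) (hB : OrthoCols B) :
    spec ((B * Bᵀ) * (1 - A * Aᵀ)) ≤ spec ((1 - B * Bᵀ) * A) := by
  have ht : ((B * Bᵀ) * (1 - A * Aᵀ))ᵀ = (1 - A * Aᵀ) * (B * Bᵀ) := by
    rw [Matrix.transpose_mul, Matrix.transpose_sub, Matrix.transpose_one,
      Matrix.transpose_mul, Matrix.transpose_transpose,
      Matrix.transpose_mul, Matrix.transpose_transpose]
  calc spec ((B * Bᵀ) * (1 - A * Aᵀ)) = spec (((B * Bᵀ) * (1 - A * Aᵀ))ᵀ) :=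
        (spec_transpose _).symm
    _ = spec ((1 - A * Aᵀ) * (B * Bᵀ)) := by rw [ht]
    _ ≤ spec ((1 - A * Aᵀ) * B) := spec_sub_proj_le B A hB
    _ = spec ((1 - B * Bᵀ) * A) := spec_proj_sym A B hA hB

lemma spec_proj_mul_proj_le_one {r s : ℕ} (A : Matrix m (Fin r) ℝ) (B : Matrix m (Fin s) ℝ)
    (hA : OrthoCols A) (hB : OrthoCols B) :
    spec ((B * Bᵀ) * (A * Aᵀ)) ≤ 1 := by
  calc spec ((B * Bᵀ) * (A * Aᵀ)) ≤ spec (B * Bᵀ) * spec (A * Aᵀ) := spec_mul_le _ _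
    _ ≤ 1 := mul_le_one₀ (spec_orthProj_le_one _ (isOrthProj_mul_self_transpose B hB))
        (spec_nonneg _) (spec_orthProj_le_one _ (isOrthProj_mul_self_transpose A hA))

lemma rank_proj_le {r k : ℕ} (A : Matrix m (Fin r) ℝ) (h : r ≤ k) : (A * Aᵀ).rank ≤ k :=
  le_trans (le_trans (Matrix.rank_mul_le_left A Aᵀ)
    (le_trans (Matrix.rank_le_card_width A) (le_of_eq (Fintype.card_fin r)))) h

lemma absorb_bound {p₁ p₂ p₃ r₂ r₃ : ℕ} (Z : Matrix (Fin p₁) (Fin p₂ × Fin p₃) ℝ)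
    (L2 G : Matrix (Fin p₂) (Fin p₂) ℝ) (L3 H : Matrix (Fin p₃) (Fin p₃) ℝ)
    (hL2 : IsOrthProj L2) (hL3 : IsOrthProj L3) (hr2 : L2.rank ≤ 2 * r₂)
    (hr3 : L3.rank ≤ 2 * r₃) (hG : L2 * G = G) (hH : L3 * H = H) {cG cH : ℝ}
    (hcG : spec G ≤ cG) (hcH : spec H ≤ cH) (hcG0 : 0 ≤ cG) (hcH0 : 0 ≤ cH) :
    spec (Z * (G ⊗ₖ H)) ≤ tauP r₂ r₃ Z * (cG * cH) := by
  have habs : (L2 ⊗ₖ L3) * (G ⊗ₖ H) = G ⊗ₖ H := by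
    rw [← Matrix.mul_kronecker_mul, hG, hH]
  have hrw : Z * (G ⊗ₖ H) = (Z * (L2 ⊗ₖ L3)) * (G ⊗ₖ H) := by
    rw [Matrix.mul_assoc, habs]
  rw [hrw]
  calc spec ((Z * (L2 ⊗ₖ L3)) * (G ⊗ₖ H))
      ≤ spec (Z * (L2 ⊗ₖ L3)) * spec (G ⊗ₖ H) := spec_mul_le _ _
    _ ≤ tauP r₂ r₃ Z * (cG * cH) := by
        apply mul_le_mul (tau_mem_le Z L2 L3 hL2 hL3 hr2 hr3)
          (le_trans (spec_kron_le G H)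
            (mul_le_mul hcG hcH (spec_nonneg _) hcG0))
          (spec_nonneg _) (tau_nonneg Z)

lemma key_diff {p₁ p₂ p₃ r₂ r₃ : ℕ} (Z : Matrix (Fin p₁) (Fin p₂ × Fin p₃) ℝ)
    (A2 B2 : Matrix (Fin p₂) (Fin r₂) ℝ) (A3 B3 : Matrix (Fin p₃) (Fin r₃) ℝ)
    (hA2 : OrthoCols A2) (hB2 : OrthoCols B2) (hA3 : OrthoCols A3) (hB3 : OrthoCols B3) :
    spec (Z * ((A2 * A2ᵀ) ⊗ₖ (A3 * A3ᵀ) - (B2 * B2ᵀ) ⊗ₖ (B3 * B3ᵀ)))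
      ≤ 2 * tauP r₂ r₃ Z * (spec ((1 - B2 * B2ᵀ) * A2) + spec ((1 - B3 * B3ᵀ) * A3)) := by
  obtain ⟨W2, hW2p, hW2r, hW2A, hW2B⟩ := exists_proj_pair A2 B2
  obtain ⟨W3, hW3p, hW3r, hW3A, hW3B⟩ := exists_proj_pair A3 B3
  have hW2r' : W2.rank ≤ 2 * r₂ := by omega
  have hW3r' : W3.rank ≤ 2 * r₃ := by omega
  set PA2 := A2 * A2ᵀ with hPA2
  set PB2 := B2 * B2ᵀ with hPB2
  set PA3 := A3 * A3ᵀ with hPA3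
  set PB3 := B3 * B3ᵀ with hPB3
  have hPA2p := isOrthProj_mul_self_transpose A2 hA2
  have hPB2p := isOrthProj_mul_self_transpose B2 hB2
  have hPA3p := isOrthProj_mul_self_transpose A3 hA3
  have hPB3p := isOrthProj_mul_self_transpose B3 hB3
  set τ := tauP r₂ r₃ Z with hτ
  set s2 := spec ((1 - PB2) * A2) with hs2
  set s3 := spec ((1 - PB3) * A3) with hs3
  have hs2' : 0 ≤ s2 := spec_nonneg _
  have hs3' : 0 ≤ s3 := spec_nonneg _
  set X1 := ((1 - PB2) * PA2) ⊗ₖ PA3 with hX1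
  set X2 := (PB2 * PA2) ⊗ₖ ((1 - PB3) * PA3) with hX2
  set Y1 := (PB2 * (1 - PA2)) ⊗ₖ PB3 with hY1
  set Y2 := (PB2 * PA2) ⊗ₖ (PB3 * (1 - PA3)) with hY2
  have hsplit : PA2 ⊗ₖ PA3 - PB2 ⊗ₖ PB3 = X1 + X2 - (Y1 + Y2) := by
    have e1 : X1 = PA2 ⊗ₖ PA3 - (PB2 * PA2) ⊗ₖ PA3 := by
      rw [hX1, Matrix.sub_mul, Matrix.one_mul, sub_kronecker]
    have e2 : X2 = (PB2 * PA2) ⊗ₖ PA3 - (PB2 * PA2) ⊗ₖ (PB3 * PA3) := by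
      rw [hX2, Matrix.sub_mul, Matrix.one_mul, kronecker_sub]
    have e3 : Y1 = PB2 ⊗ₖ PB3 - (PB2 * PA2) ⊗ₖ PB3 := by
      rw [hY1, Matrix.mul_sub, Matrix.mul_one, sub_kronecker]
    have e4 : Y2 = (PB2 * PA2) ⊗ₖ PB3 - (PB2 * PA2) ⊗ₖ (PB3 * PA3) := by
      rw [hY2, Matrix.mul_sub, Matrix.mul_one, kronecker_sub]
    rw [e1, e2, e3, e4]
    abel
  have hmul : Z * (PA2 ⊗ₖ PA3 - PB2 ⊗ₖ PB3) = (Z * X1 + Z * X2) - (Z * Y1 + Z * Y2) := by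
    rw [hsplit, Matrix.mul_sub, Matrix.mul_add, Matrix.mul_add]
  -- bound (a)
  have hfixa : W2 * ((1 - PB2) * PA2) = (1 - PB2) * PA2 := by
    rw [Matrix.sub_mul, Matrix.one_mul, Matrix.mul_sub]
    congr 1
    · rw [hPA2, ← Matrix.mul_assoc, hW2A]
    · rw [hPB2, Matrix.mul_assoc B2 B2ᵀ PA2, ← Matrix.mul_assoc W2 B2, hW2B]
  have ha : spec (Z * X1) ≤ τ * (s2 * 1) := by
    refine absorb_bound Z W2 _ PA3 _ hW2p hPA3p hW2r' (rank_proj_le A3 (by omega)) hfixa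
      hPA3p.2 ?_ (spec_orthProj_le_one _ hPA3p) hs2' zero_le_one
    exact spec_sub_proj_le A2 B2 hA2
  -- bound (b)
  have hfixb3 : W3 * ((1 - PB3) * PA3) = (1 - PB3) * PA3 := by
    rw [Matrix.sub_mul, Matrix.one_mul, Matrix.mul_sub]
    congr 1
    · rw [hPA3, ← Matrix.mul_assoc, hW3A]
    · rw [hPB3, Matrix.mul_assoc B3 B3ᵀ PA3, ← Matrix.mul_assoc W3 B3, hW3B]
  have hfixb2 : PB2 * (PB2 * PA2) = PB2 * PA2 := by
    rw [← Matrix.mul_assoc, hPB2p.2]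
  have hb : spec (Z * X2) ≤ τ * (1 * s3) := by
    refine absorb_bound Z PB2 _ W3 _ hPB2p hW3p (rank_proj_le B2 (by omega)) hW3r' hfixb2
      hfixb3 (spec_proj_mul_proj_le_one A2 B2 hA2 hB2) ?_ zero_le_one hs3'
    exact spec_sub_proj_le A3 B3 hA3
  -- bound (c)
  have hfixc : PB2 * (PB2 * (1 - PA2)) = PB2 * (1 - PA2) := by
    rw [← Matrix.mul_assoc, hPB2p.2]
  have hc : spec (Z * Y1) ≤ τ * (s2 * 1) := by
    refine absorb_bound Z PB2 _ PB3 _ hPB2p hPB3p (rank_proj_le B2 (by omega))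
      (rank_proj_le B3 (by omega)) hfixc hPB3p.2 ?_ (spec_orthProj_le_one _ hPB3p)
      hs2' zero_le_one
    exact spec_proj_one_sub_le A2 B2 hA2 hB2
  -- bound (d)
  have hfixd : PB3 * (PB3 * (1 - PA3)) = PB3 * (1 - PA3) := by
    rw [← Matrix.mul_assoc, hPB3p.2]
  have hd : spec (Z * Y2) ≤ τ * (1 * s3) := by
    refine absorb_bound Z PB2 _ PB3 _ hPB2p hPB3p (rank_proj_le B2 (by omega))
      (rank_proj_le B3 (by omega)) hfixb2 hfixd
      (spec_proj_mul_proj_le_one A2 B2 hA2 hB2) ?_ zero_le_one hs3'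
    exact spec_proj_one_sub_le A3 B3 hA3 hB3
  have htot : spec (Z * (PA2 ⊗ₖ PA3 - PB2 ⊗ₖ PB3))
      ≤ spec (Z * X1) + spec (Z * X2) + (spec (Z * Y1) + spec (Z * Y2)) := by
    rw [hmul]
    calc spec ((Z * X1 + Z * X2) - (Z * Y1 + Z * Y2))
        ≤ spec (Z * X1 + Z * X2) + spec (Z * Y1 + Z * Y2) := spec_sub_le _ _
      _ ≤ spec (Z * X1) + spec (Z * X2) + (spec (Z * Y1) + spec (Z * Y2)) :=
          add_le_add (spec_add_le _ _) (spec_add_le _ _)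
  have hτ0 : 0 ≤ τ := tau_nonneg Z
  calc spec (Z * (PA2 ⊗ₖ PA3 - PB2 ⊗ₖ PB3))
      ≤ spec (Z * X1) + spec (Z * X2) + (spec (Z * Y1) + spec (Z * Y2)) := htot
    _ ≤ τ * (s2 * 1) + τ * (1 * s3) + (τ * (s2 * 1) + τ * (1 * s3)) := by
        apply add_le_add (add_le_add ha hb) (add_le_add hc hd)
    _ = 2 * τ * (s2 + s3) := by ring

end S13


namespace S13

variable {m n : Type*} [Fintype m] [Fintype n]

lemma enorm2_zero : enorm2 (0 : n → ℝ) = 0 := by simp [enorm2]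

lemma row_le_twoInf (M : Matrix m n ℝ) (i : m) : enorm2 (M i) ≤ twoInf M := by
  have hset : {c | ∃ i, c = enorm2 (M i)} = Set.range (fun i => enorm2 (M i)) := by
    ext c
    simp [Set.mem_setOf_eq, Set.mem_range, eq_comm]
  apply le_csSup
  · rw [hset]
    exact (Set.finite_range _).bddAbove
  · exact ⟨i, rfl⟩

lemma spec_isEmpty [IsEmpty n] (M : Matrix m n ℝ) : spec M = 0 := by
  unfold spec
  have he : {c | ∃ v : n → ℝ, enorm2 v ≤ 1 ∧ c = enorm2 (M.mulVec v)} = {0} := by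
    ext c
    simp only [Set.mem_setOf_eq, Set.mem_singleton_iff]
    constructor
    · rintro ⟨v, hv, rfl⟩
      have : M.mulVec v = 0 := by
        funext i
        simp [Matrix.mulVec, dotProduct]
      rw [this, enorm2_zero]
    · rintro rfl
      exact ⟨0, by rw [enorm2_zero]; norm_num, by rw [Matrix.mulVec_zero, enorm2_zero]⟩
  rw [he, csSup_singleton]

lemma sval_one_empty [IsEmpty n] (M : Matrix m n ℝ) : sval M 1 = 0 := by
  unfold sval
  have he : {c | 0 ≤ c ∧ ∃ V : Submodule ℝ (n → ℝ), Module.finrank ℝ V = 1 ∧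
      ∀ v ∈ V, c * enorm2 v ≤ enorm2 (M.mulVec v)} = ∅ := by
    ext c
    simp only [Set.mem_setOf_eq, Set.mem_empty_iff_false, iff_false, not_and]
    rintro - ⟨V, hV, -⟩
    have h1 : Module.finrank ℝ V ≤ Module.finrank ℝ (n → ℝ) := V.finrank_le
    rw [hV, Module.finrank_pi, Fintype.card_eq_zero] at h1
    omega
  rw [he]
  exact Real.sSup_empty

lemma spec_le_sval_one [Nonempty n] (M : Matrix m n ℝ) : spec M ≤ sval M 1 := by
  classical
  set S := {c | 0 ≤ c ∧ ∃ V : Submodule ℝ (n → ℝ), Module.finrank ℝ V = 1 ∧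
      ∀ v ∈ V, c * enorm2 v ≤ enorm2 (M.mulVec v)} with hS
  have hbdd : BddAbove S := by
    refine ⟨spec M, ?_⟩
    rintro c ⟨hc0, V, hV, hVb⟩
    have hVne : V ≠ ⊥ := by
      intro h
      rw [h, finrank_bot] at hV
      omega
    obtain ⟨x, hxV, hx0⟩ := (Submodule.ne_bot_iff V).mp hVne
    have h1 := hVb x hxV
    have h2 := enorm2_mulVec_le M x
    have hpos := enorm2_pos hx0
    have : c * enorm2 x ≤ spec M * enorm2 x := le_trans h1 h2
    exact le_of_mul_le_mul_right this hpos
  have hmem0 : (0 : ℝ) ∈ S := by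
    obtain ⟨j⟩ := ‹Nonempty n›
    have hx : (Pi.single j 1 : n → ℝ) ≠ 0 := by
      intro h
      have := congrFun h j
      rw [Pi.single_eq_same] at this
      exact one_ne_zero this
    exact ⟨le_rfl, Submodule.span ℝ {Pi.single j 1}, finrank_span_singleton hx,
      fun v _ => by rw [zero_mul]; exact enorm2_nonneg _⟩
  refine csSup_le ⟨enorm2 (M.mulVec 0), 0, by rw [enorm2_zero]; norm_num, rfl⟩ ?_
  rintro c ⟨v, hv, rfl⟩
  by_cases hv0 : v = 0
  · subst hv0
    rw [Matrix.mulVec_zero, enorm2_zero]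
    exact le_csSup hbdd hmem0
  · have hpos := enorm2_pos hv0
    set c₀ := enorm2 (M.mulVec v) / enorm2 v with hc₀
    have hc₀mem : c₀ ∈ S := by
      refine ⟨div_nonneg (enorm2_nonneg _) hpos.le, Submodule.span ℝ {v},
        finrank_span_singleton hv0, ?_⟩
      intro w hw
      obtain ⟨a, rfl⟩ := Submodule.mem_span_singleton.mp hw
      rw [Matrix.mulVec_smul, enorm2_smul, enorm2_smul, hc₀]
      apply le_of_eq
      field_simp
    have hle : enorm2 (M.mulVec v) ≤ c₀ := by
      rw [hc₀, le_div_iff₀ hpos]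
      nlinarith [enorm2_nonneg (M.mulVec v)]
    exact le_trans hle (le_csSup hbdd hc₀mem)

lemma sval_full_lower {r : ℕ} (lam : ℝ) (hlam : 0 < lam) (Lh : Matrix (Fin r) (Fin r) ℝ)
    (hLhs : lam / 2 ≤ sval Lh r) : ∀ v, (lam / 2) * enorm2 v ≤ enorm2 (Lh.mulVec v) := by
  classical
  set S := {c | 0 ≤ c ∧ ∃ V : Submodule ℝ (Fin r → ℝ), Module.finrank ℝ V = r ∧
      ∀ v ∈ V, c * enorm2 v ≤ enorm2 (Lh.mulVec v)} with hS
  have hne : S.Nonempty := by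
    by_contra h
    rw [Set.not_nonempty_iff_eq_empty] at h
    have : sval Lh r = 0 := by
      unfold sval
      rw [← hS, h]
      exact Real.sSup_empty
    rw [this] at hLhs
    linarith
  intro v
  by_cases hv0 : v = 0
  · subst hv0
    simp [Matrix.mulVec_zero, enorm2_zero]
  have hpos := enorm2_pos hv0
  have hub : ∀ c ∈ S, c ≤ enorm2 (Lh.mulVec v) / enorm2 v := by
    rintro c ⟨hc0, V, hV, hVb⟩
    have hVtop : V = ⊤ := by
      apply Submodule.eq_top_of_finrank_eq
      rw [hV, Module.finrank_pi, Fintype.card_fin]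
    have := hVb v (by rw [hVtop]; trivial)
    rw [le_div_iff₀ hpos]
    exact this
  have hsup : sval Lh r ≤ enorm2 (Lh.mulVec v) / enorm2 v := csSup_le hne hub
  have h2 : lam / 2 ≤ enorm2 (Lh.mulVec v) / enorm2 v := le_trans hLhs hsup
  rw [le_div_iff₀ hpos] at h2
  exact h2

lemma spec_inv_le {r : ℕ} (lam : ℝ) (hlam : 0 < lam) (Lh : Matrix (Fin r) (Fin r) ℝ)
    (hLh : IsUnit Lh.det) (hLhs : lam / 2 ≤ sval Lh r) : spec Lh⁻¹ ≤ 2 / lam := by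
  have hall := sval_full_lower lam hlam Lh hLhs
  refine spec_le_bound _ (by positivity) fun w => ?_
  have h1 := hall (Lh⁻¹.mulVec w)
  rw [Matrix.mulVec_mulVec, Matrix.mul_nonsing_inv Lh hLh, Matrix.one_mulVec] at h1
  rw [div_mul_eq_mul_div, le_div_iff₀ hlam] at *
  nlinarith [h1]

end S13


set_option maxHeartbeats 1600000 in
/-- deterministic bound for the linear term. -/
theorem stmt13 {p₁ p₂ p₃ r₁ r₂ r₃ : ℕ}
    (lam : ℝ) (hlam : 0 < lam)
    (T1 : Matrix (Fin p₁) (Fin p₂ × Fin p₃) ℝ)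
    (U1 : Matrix (Fin p₁) (Fin r₁) ℝ) (L1 : Matrix (Fin r₁) (Fin r₁) ℝ)
    (V1 : Matrix (Fin p₂ × Fin p₃) (Fin r₁) ℝ)
    (hSVD : IsCompactSVD T1 U1 L1 V1) (hsr : lam ≤ sval T1 r₁)
    (U2 : Matrix (Fin p₂) (Fin r₂) ℝ) (U3 : Matrix (Fin p₃) (Fin r₃) ℝ)
    (hU2 : OrthoCols U2) (hU3 : OrthoCols U3)
    (hV : ((U2 * U2ᵀ) ⊗ₖ (U3 * U3ᵀ)) * V1 = V1)
    (Z1 : Matrix (Fin p₁) (Fin p₂ × Fin p₃) ℝ)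
    (Uh2 : Matrix (Fin p₂) (Fin r₂) ℝ) (Uh3 : Matrix (Fin p₃) (Fin r₃) ℝ)
    (Ut2 : Matrix (Fin p₂) (Fin r₂) ℝ) (Ut3 : Matrix (Fin p₃) (Fin r₃) ℝ)
    (hUh2 : OrthoCols Uh2) (hUh3 : OrthoCols Uh3)
    (hUt2 : OrthoCols Ut2) (hUt3 : OrthoCols Ut3)
    (kappa : ℝ) (hkappa : sval T1 1 ≤ kappa * lam)
    (Uh1 : Matrix (Fin p₁) (Fin r₁) ℝ) (hUh1 : OrthoCols Uh1)
    (Lh : Matrix (Fin r₁) (Fin r₁) ℝ) (hLh : IsUnit Lh.det)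
    (hLhs : lam / 2 ≤ sval Lh r₁)
    (m : Fin p₁) :
    enorm2 ((((1 - U1 * U1ᵀ) * Z1 * ((Uh2 * Uh2ᵀ) ⊗ₖ (Uh3 * Uh3ᵀ)) * T1ᵀ * Uh1 *
        (Lh⁻¹ * Lh⁻¹) : Matrix (Fin p₁) (Fin r₁) ℝ)) m) ≤
      (8 * kappa / lam) * twoInf U1 *
          (tauP r₂ r₃ Z1 * (sinTheta U2 Uh2 + sinTheta U3 Uh3) + spec (U1ᵀ * Z1 * V1)) +
        (8 * kappa / lam) * (tauP r₂ r₃ Z1 * (sinTheta Ut2 Uh2 + sinTheta Ut3 Uh3)) +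
        (4 * kappa / lam) * enorm2 ((Z1 * ((Ut2 * Ut2ᵀ) ⊗ₖ (Ut3 * Ut3ᵀ)) * V1 : Matrix (Fin p₁) (Fin r₁) ℝ) m) := by
  classical
  obtain ⟨hU1, hV1, -, -, hT1⟩ := hSVD
  set P1 := U1 * U1ᵀ with hP1
  set Ph := (Uh2 * Uh2ᵀ) ⊗ₖ (Uh3 * Uh3ᵀ) with hPh
  set Pt := (Ut2 * Ut2ᵀ) ⊗ₖ (Ut3 * Ut3ᵀ) with hPt
  set Pu := (U2 * U2ᵀ) ⊗ₖ (U3 * U3ᵀ) with hPu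
  set τ := tauP r₂ r₃ Z1 with hτ
  set η := sinTheta U2 Uh2 + sinTheta U3 Uh3 with hηdef
  set η' := sinTheta Ut2 Uh2 + sinTheta Ut3 Uh3 with hη'def
  have hτ0 : 0 ≤ τ := S13.tau_nonneg Z1
  have hη0 : 0 ≤ η := by
    rw [hηdef]
    exact add_nonneg (S13.spec_nonneg _) (S13.spec_nonneg _)
  have hη'0 : 0 ≤ η' := by
    rw [hη'def]
    exact add_nonneg (S13.spec_nonneg _) (S13.spec_nonneg _)
  have hspecT : spec T1 ≤ kappa * lam := by
    rcases isEmpty_or_nonempty (Fin p₂ × Fin p₃) with hE | hNE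
    · rw [S13.spec_isEmpty]
      rw [S13.sval_one_empty T1] at hkappa
      exact hkappa
    · exact le_trans (S13.spec_le_sval_one T1) hkappa
  have hk0 : 0 ≤ kappa := by
    have h := S13.spec_nonneg T1
    nlinarith
  have hkl0 : 0 ≤ kappa * lam := mul_nonneg hk0 hlam.le
  have hLinv : spec Lh⁻¹ ≤ 2 / lam := S13.spec_inv_le lam hlam Lh hLh hLhs
  have hL1eq : L1 = U1ᵀ * T1 * V1 := by
    rw [hT1]
    have : U1ᵀ * (U1 * L1 * V1ᵀ) * V1 = ((U1ᵀ * U1) * L1) * (V1ᵀ * V1) := by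
      simp only [Matrix.mul_assoc]
    rw [this, hU1, hV1, Matrix.one_mul, Matrix.mul_one]
  have hspecL1 : spec L1 ≤ kappa * lam := by
    rw [hL1eq]
    calc spec (U1ᵀ * T1 * V1) ≤ spec (U1ᵀ * T1) * spec V1 := S13.spec_mul_le _ _
      _ ≤ spec (U1ᵀ * T1) * 1 :=
          mul_le_mul_of_nonneg_left (S13.spec_orthonormal_le_one V1 hV1) (S13.spec_nonneg _)
      _ = spec (U1ᵀ * T1) := mul_one _
      _ ≤ spec U1ᵀ * spec T1 := S13.spec_mul_le _ _
      _ ≤ 1 * (kappa * lam) :=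
          mul_le_mul (S13.spec_orthonormal_t_le_one U1 hU1) hspecT (S13.spec_nonneg _)
            zero_le_one
      _ = kappa * lam := one_mul _
  set Bmat := L1ᵀ * (U1ᵀ * Uh1) * (Lh⁻¹ * Lh⁻¹) with hBmat
  have hspecB : spec Bmat ≤ 4 * kappa / lam := by
    have h1 : spec (L1ᵀ * (U1ᵀ * Uh1)) ≤ kappa * lam := by
      calc spec (L1ᵀ * (U1ᵀ * Uh1)) ≤ spec L1ᵀ * spec (U1ᵀ * Uh1) := S13.spec_mul_le _ _
        _ ≤ (kappa * lam) * 1 := by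
            apply mul_le_mul _ _ (S13.spec_nonneg _) hkl0
            · rw [S13.spec_transpose]; exact hspecL1
            · calc spec (U1ᵀ * Uh1) ≤ spec U1ᵀ * spec Uh1 := S13.spec_mul_le _ _
                _ ≤ 1 := mul_le_one₀ (S13.spec_orthonormal_t_le_one U1 hU1)
                    (S13.spec_nonneg _) (S13.spec_orthonormal_le_one Uh1 hUh1)
        _ = kappa * lam := mul_one _
    have h2 : spec (Lh⁻¹ * Lh⁻¹) ≤ (2 / lam) * (2 / lam) := by
      calc spec (Lh⁻¹ * Lh⁻¹) ≤ spec Lh⁻¹ * spec Lh⁻¹ := S13.spec_mul_le _ _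
        _ ≤ (2 / lam) * (2 / lam) :=
            mul_le_mul hLinv hLinv (S13.spec_nonneg _) (by positivity)
    calc spec Bmat ≤ spec (L1ᵀ * (U1ᵀ * Uh1)) * spec (Lh⁻¹ * Lh⁻¹) := by
          rw [hBmat]; exact S13.spec_mul_le _ _
      _ ≤ (kappa * lam) * ((2 / lam) * (2 / lam)) :=
          mul_le_mul h1 h2 (S13.spec_nonneg _) hkl0
      _ = 4 * kappa / lam := by field_simp; ring
  have hfac : (1 - P1) * Z1 * Ph * T1ᵀ * Uh1 * (Lh⁻¹ * Lh⁻¹)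
      = ((1 - P1) * Z1 * Ph * V1) * Bmat := by
    rw [hT1, hBmat]
    simp only [Matrix.transpose_mul, Matrix.transpose_transpose, Matrix.mul_assoc]
  set A := (1 - P1) * Z1 * Ph * V1 with hA
  set G := Z1 * Ph * V1 with hG
  set C := U1ᵀ * G with hC
  have hAG : A = G - U1 * C := by
    rw [hA, hG, hC, hP1, hG]
    simp only [Matrix.sub_mul, Matrix.one_mul, Matrix.mul_assoc]
  have hkey_u : spec (Z1 * (Ph - Pu)) ≤ 2 * τ * η := by
    rw [hηdef, hτ, hPh, hPu]
    exact S13.key_diff Z1 Uh2 U2 Uh3 U3 hUh2 hU2 hUh3 hU3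
  have hkey_t : spec (Z1 * (Ph - Pt)) ≤ 2 * τ * η' := by
    rw [hη'def, hτ, hPh, hPt]
    exact S13.key_diff Z1 Uh2 Ut2 Uh3 Ut3 hUh2 hUt2 hUh3 hUt3
  have hGsplit : G = Z1 * V1 + Z1 * (Ph - Pu) * V1 := by
    have hPuV : Z1 * Pu * V1 = Z1 * V1 := by rw [Matrix.mul_assoc, hV]
    rw [hG, Matrix.mul_sub, Matrix.sub_mul, hPuV]
    abel
  have hCle : spec C ≤ spec (U1ᵀ * Z1 * V1) + 2 * τ * η := by
    rw [hC, hGsplit, Matrix.mul_add]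
    calc spec (U1ᵀ * (Z1 * V1) + U1ᵀ * (Z1 * (Ph - Pu) * V1))
        ≤ spec (U1ᵀ * (Z1 * V1)) + spec (U1ᵀ * (Z1 * (Ph - Pu) * V1)) := S13.spec_add_le _ _
      _ ≤ spec (U1ᵀ * Z1 * V1) + 2 * τ * η := by
          apply add_le_add
          · rw [Matrix.mul_assoc]
          · calc spec (U1ᵀ * (Z1 * (Ph - Pu) * V1))
                ≤ spec U1ᵀ * spec (Z1 * (Ph - Pu) * V1) := S13.spec_mul_le _ _
              _ ≤ 1 * spec (Z1 * (Ph - Pu) * V1) :=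
                  mul_le_mul_of_nonneg_right (S13.spec_orthonormal_t_le_one U1 hU1)
                    (S13.spec_nonneg _)
              _ = spec (Z1 * (Ph - Pu) * V1) := one_mul _
              _ ≤ spec (Z1 * (Ph - Pu)) * spec V1 := S13.spec_mul_le _ _
              _ ≤ spec (Z1 * (Ph - Pu)) * 1 :=
                  mul_le_mul_of_nonneg_left (S13.spec_orthonormal_le_one V1 hV1)
                    (S13.spec_nonneg _)
              _ = spec (Z1 * (Ph - Pu)) := mul_one _
              _ ≤ 2 * τ * η := hkey_u
  have htwoInf0 : 0 ≤ twoInf U1 :=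
    le_trans (S13.enorm2_nonneg (U1 m)) (S13.row_le_twoInf U1 m)
  have h_rowA : enorm2 (A m) ≤ enorm2 (G m) + twoInf U1 * spec C := by
    rw [hAG]
    calc enorm2 ((G - U1 * C) m) ≤ enorm2 (G m) + enorm2 ((U1 * C) m) :=
        S13.enorm2_row_sub_le _ _ _
      _ ≤ enorm2 (G m) + twoInf U1 * spec C := by
          apply add_le_add le_rfl
          calc enorm2 ((U1 * C) m) ≤ enorm2 (U1 m) * spec C := S13.enorm2_row_mul_le _ _ _
            _ ≤ twoInf U1 * spec C :=
                mul_le_mul_of_nonneg_right (S13.row_le_twoInf U1 m) (S13.spec_nonneg _)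
  have h_rowG : enorm2 (G m) ≤ enorm2 ((Z1 * Pt * V1) m) + 2 * τ * η' := by
    have hGsplit2 : G = Z1 * Pt * V1 + Z1 * (Ph - Pt) * V1 := by
      rw [hG, Matrix.mul_sub, Matrix.sub_mul]
      abel
    rw [hGsplit2]
    calc enorm2 ((Z1 * Pt * V1 + Z1 * (Ph - Pt) * V1) m)
        ≤ enorm2 ((Z1 * Pt * V1) m) + enorm2 ((Z1 * (Ph - Pt) * V1) m) :=
          S13.enorm2_row_add_le _ _ _
      _ ≤ enorm2 ((Z1 * Pt * V1) m) + 2 * τ * η' := by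
          apply add_le_add le_rfl
          calc enorm2 ((Z1 * (Ph - Pt) * V1) m) ≤ spec (Z1 * (Ph - Pt) * V1) :=
              S13.row_le_spec _ _
            _ ≤ spec (Z1 * (Ph - Pt)) * spec V1 := S13.spec_mul_le _ _
            _ ≤ spec (Z1 * (Ph - Pt)) * 1 :=
                mul_le_mul_of_nonneg_left (S13.spec_orthonormal_le_one V1 hV1)
                  (S13.spec_nonneg _)
            _ = spec (Z1 * (Ph - Pt)) := mul_one _
            _ ≤ 2 * τ * η' := hkey_t
  rw [hfac]
  have hs0 : 0 ≤ spec (U1ᵀ * Z1 * V1) := S13.spec_nonneg _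
  have hxi0 : 0 ≤ enorm2 ((Z1 * Pt * V1) m) := S13.enorm2_nonneg _
  have hbig0 : 0 ≤ enorm2 ((Z1 * Pt * V1) m) + 2 * τ * η'
      + twoInf U1 * (spec (U1ᵀ * Z1 * V1) + 2 * τ * η) := by
    have h2a : 0 ≤ 2 * τ * η' := mul_nonneg (mul_nonneg (by norm_num) hτ0) hη'0
    have h2b : 0 ≤ 2 * τ * η := mul_nonneg (mul_nonneg (by norm_num) hτ0) hη0
    exact add_nonneg (add_nonneg hxi0 h2a) (mul_nonneg htwoInf0 (add_nonneg hs0 h2b))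
  calc enorm2 ((A * Bmat) m) ≤ enorm2 (A m) * spec Bmat := S13.enorm2_row_mul_le _ _ _
    _ ≤ (enorm2 ((Z1 * Pt * V1) m) + 2 * τ * η'
          + twoInf U1 * (spec (U1ᵀ * Z1 * V1) + 2 * τ * η)) * (4 * kappa / lam) := by
        apply mul_le_mul _ hspecB (S13.spec_nonneg _) hbig0
        calc enorm2 (A m) ≤ enorm2 (G m) + twoInf U1 * spec C := h_rowA
          _ ≤ (enorm2 ((Z1 * Pt * V1) m) + 2 * τ * η')
              + twoInf U1 * (spec (U1ᵀ * Z1 * V1) + 2 * τ * η) :=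
            add_le_add h_rowG (mul_le_mul_of_nonneg_left hCle htwoInf0)
    _ ≤ (8 * kappa / lam) * twoInf U1 * (τ * η + spec (U1ᵀ * Z1 * V1))
        + (8 * kappa / lam) * (τ * η')
        + (4 * kappa / lam) * enorm2 ((Z1 * Pt * V1) m) := by
        have hKL : 0 ≤ kappa / lam := div_nonneg hk0 hlam.le
        have h1 : 0 ≤ kappa / lam * (twoInf U1 * spec (U1ᵀ * Z1 * V1)) :=
          mul_nonneg hKL (mul_nonneg htwoInf0 hs0)
        have hτη : 0 ≤ τ * η := mul_nonneg hτ0 hη0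
        have hτη' : 0 ≤ τ * η' := mul_nonneg hτ0 hη'0
        have hl : lam ≠ 0 := hlam.ne'
        field_simp
        ring_nf
        nlinarith [mul_nonneg (mul_nonneg hk0 htwoInf0) hs0, hlam,
          mul_nonneg (mul_nonneg (mul_nonneg hk0 htwoInf0) hs0) hlam.le,
          mul_nonneg (mul_nonneg (mul_nonneg hk0 htwoInf0) hs0) (mul_pos hlam hlam).le]


end
end

section
/- Deterministic bound for the quadratic term. In the setting of the deterministic perturbation framework, additionally let Û₁ ∈ ℝ^{p₁×r₁} have orthonormal columns, let Λ̂ be an invertible r₁×r₁ matrix with smallest singular value at least λ/2, fix m ∈ {1,…,p₁}, and set ξ := ‖e_mᵀ Z₁ P̃‖₂ and Q := (I − U₁U₁ᵀ)·Z₁·P̂·Z₁ᵀ·Û₁·Λ̂^{-2}. Then ‖e_mᵀ Q‖₂ ≤ (4/λ²)·‖U₁‖_{2,∞}·τ₁·(τ₁·η + ‖U₁ᵀZ₁(P_{U₂}⊗P_{U₃})‖) + (16/λ²)·τ₁²·η̃ + (4/λ²)·ξ·( τ₁·‖sinΘ(Û₁,U₁)‖ + τ₁·η + ‖U₁ᵀZ₁(P_{U₂}⊗P_{U₃})‖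 ). -/
open Matrix
open scoped BigOperators Kronecker

noncomputable section

set_option linter.unusedSectionVars false
set_option linter.unusedVariables false

namespace Stmt14

open scoped Matrix.Norms.L2Operator

section Bridge
variable {m n l : Type*} [Fintype m] [Fintype n] [Fintype l]
variable [DecidableEq m] [DecidableEq n] [DecidableEq l]

lemma enorm2_eq_norm (v : n → ℝ) :
    enorm2 v = ‖(WithLp.equiv 2 (n → ℝ)).symm v‖ := by
  unfold enorm2
  rw [EuclideanSpace.norm_eq]
  refine congrArg Real.sqrt (Finset.sum_congr rfl fun i _ => ?_)
  rw [Real.norm_eq_abs, sq_abs]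
  rfl

lemma enorm2_nonneg (v : n → ℝ) : 0 ≤ enorm2 v := Real.sqrt_nonneg _

lemma enorm2_zero : enorm2 (0 : n → ℝ) = 0 := by simp [enorm2]

lemma enorm2_eq_zero_iff {v : n → ℝ} : enorm2 v = 0 ↔ v = 0 := by
  rw [enorm2_eq_norm, norm_eq_zero]
  exact ⟨fun h => WithLp.toLp_injective 2 h, fun h => by rw [h]; rfl⟩

lemma enorm2_add_le (u v : n → ℝ) : enorm2 (u + v) ≤ enorm2 u + enorm2 v := by
  rw [enorm2_eq_norm, enorm2_eq_norm, enorm2_eq_norm,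
    show (WithLp.equiv 2 (n → ℝ)).symm (u + v) = (WithLp.equiv 2 (n → ℝ)).symm u + (WithLp.equiv 2 (n → ℝ)).symm v from rfl]
  exact norm_add_le _ _

lemma enorm2_smul (c : ℝ) (v : n → ℝ) : enorm2 (c • v) = |c| * enorm2 v := by
  rw [enorm2_eq_norm, enorm2_eq_norm, show (WithLp.equiv 2 (n → ℝ)).symm (c • v) = c • (WithLp.equiv 2 (n → ℝ)).symm v from rfl, norm_smul, Real.norm_eq_abs]

lemma enorm2_single (i : n) : enorm2 (Pi.single i (1:ℝ)) = 1 := by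
  simp [enorm2, Pi.single_apply, apply_ite (· ^ (2:ℕ)), Finset.sum_ite_eq']

lemma sq_enorm2 (v : n → ℝ) : enorm2 v ^ 2 = ∑ i, (v i) ^ 2 :=
  Real.sq_sqrt (Finset.sum_nonneg fun i _ => sq_nonneg _)

lemma enorm2_mulVec_le (M : Matrix m n ℝ) (v : n → ℝ) :
    enorm2 (M *ᵥ v) ≤ ‖M‖ * enorm2 v := by
  rw [enorm2_eq_norm, enorm2_eq_norm]
  exact M.l2_opNorm_mulVec ((WithLp.equiv 2 (n → ℝ)).symm v)

lemma sq_mulVec_le (M : Matrix m n ℝ) (v : n → ℝ) :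
    ∑ i, ((M *ᵥ v) i) ^ 2 ≤ ‖M‖ ^ 2 * ∑ i, (v i) ^ 2 := by
  rw [← sq_enorm2, ← sq_enorm2, ← mul_pow]
  exact pow_le_pow_left₀ (enorm2_nonneg _) (enorm2_mulVec_le M v) 2

lemma enorm2_le_of_sq {v : n → ℝ} {w : m → ℝ} {c : ℝ} (hc : 0 ≤ c)
    (h : ∑ i, (w i) ^ 2 ≤ c ^ 2 * ∑ i, (v i) ^ 2) : enorm2 w ≤ c * enorm2 v := by
  unfold enorm2
  rw [← Real.sqrt_sq hc, ← Real.sqrt_mul (sq_nonneg c)]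
  exact Real.sqrt_le_sqrt h

lemma norm_le_of_mulVec {M : Matrix m n ℝ} {c : ℝ}
    (hc : 0 ≤ c) (h : ∀ v : n → ℝ, enorm2 (M *ᵥ v) ≤ c * enorm2 v) : ‖M‖ ≤ c := by
  rw [Matrix.l2_opNorm_def]
  refine ContinuousLinearMap.opNorm_le_bound _ hc fun x => ?_
  have h2 := h (WithLp.equiv 2 (n → ℝ) x)
  rw [enorm2_eq_norm, enorm2_eq_norm] at h2
  exact h2

lemma spec_eq_norm (M : Matrix m n ℝ) : spec M = ‖M‖ := by
  rw [Matrix.l2_opNorm_def, ← ContinuousLinearMap.sSup_unitClosedBall_eq_norm]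
  refine congrArg sSup ?_
  ext c
  constructor
  · rintro ⟨v, hv, rfl⟩
    refine ⟨(WithLp.equiv 2 (n → ℝ)).symm v, ?_, ?_⟩
    · rw [Metric.mem_closedBall, dist_zero_right]
      rw [enorm2_eq_norm] at hv
      exact hv
    · rw [enorm2_eq_norm]
      rfl
  · rintro ⟨x, hx, rfl⟩
    refine ⟨WithLp.equiv 2 (n → ℝ) x, ?_, ?_⟩
    · rw [enorm2_eq_norm]
      rw [Metric.mem_closedBall, dist_zero_right] at hx
      exact hx
    · rw [enorm2_eq_norm]
      rfl

lemma conjTranspose_eq_transpose (A : Matrix m n ℝ) : Aᴴ = Aᵀ := by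
  ext i j; simp [Matrix.conjTranspose_apply]

lemma norm_transpose (A : Matrix m n ℝ) : ‖Aᵀ‖ = ‖A‖ := by
  rw [← conjTranspose_eq_transpose]; exact A.l2_opNorm_conjTranspose

lemma norm_matrix_one_le : ‖(1 : Matrix n n ℝ)‖ ≤ 1 := by
  have h1 : toEuclideanCLM (𝕜 := ℝ) (n := n) 1 = 1 := _root_.map_one _
  rw [Matrix.cstar_norm_def, h1, ContinuousLinearMap.one_def]
  exact ContinuousLinearMap.norm_id_le

lemma norm_mul_le' (A : Matrix m n ℝ) (B : Matrix n l ℝ) : ‖A * B‖ ≤ ‖A‖ * ‖B‖ :=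
  Matrix.l2_opNorm_mul A B

lemma row_le_norm (M : Matrix m n ℝ) (i : m) :
    enorm2 (M i) ≤ ‖M‖ := by
  have hrow : M i = Mᵀ *ᵥ Pi.single i 1 := by
    ext j
    simp [Matrix.mulVec, dotProduct, Pi.single_apply]
  rw [hrow]
  calc enorm2 (Mᵀ *ᵥ Pi.single i 1) ≤ ‖Mᵀ‖ * enorm2 (Pi.single i (1:ℝ)) :=
        enorm2_mulVec_le _ _
  _ = ‖M‖ := by rw [enorm2_single, norm_transpose, mul_one]

lemma row_mul_le (X : Matrix m n ℝ) (Y : Matrix n l ℝ) (i : m) :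
    enorm2 ((X * Y) i) ≤ enorm2 (X i) * ‖Y‖ := by
  have hrow : (X * Y) i = Yᵀ *ᵥ (X i) := by
    ext j
    simp [Matrix.mul_apply, Matrix.mulVec, dotProduct, mul_comm]
  rw [hrow]
  calc enorm2 (Yᵀ *ᵥ X i) ≤ ‖Yᵀ‖ * enorm2 (X i) := enorm2_mulVec_le _ _
  _ = enorm2 (X i) * ‖Y‖ := by rw [norm_transpose]; ring

end Bridge

end Stmt14

namespace Stmt14
open scoped Matrix.Norms.L2Operator

section MatNorms
variable {m n l : Type*} [Fintype m] [Fintype n] [Fintype l]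
variable [DecidableEq m] [DecidableEq n] [DecidableEq l]

lemma orthoCols_norm_le {r : ℕ} {U : Matrix m (Fin r) ℝ} (h : OrthoCols U) : ‖U‖ ≤ 1 := by
  have h2 : ‖U‖ * ‖U‖ ≤ 1 := by
    rw [← Matrix.l2_opNorm_conjTranspose_mul_self, conjTranspose_eq_transpose, h]
    exact norm_matrix_one_le
  nlinarith [norm_nonneg U, mul_self_nonneg (‖U‖ - 1)]

lemma isOrthProj_norm_le {P : Matrix n n ℝ} (h : IsOrthProj P) : ‖P‖ ≤ 1 := by
  have h2 : ‖P‖ * ‖P‖ = ‖P‖ := by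
    rw [← Matrix.l2_opNorm_conjTranspose_mul_self, conjTranspose_eq_transpose, h.1, h.2]
  nlinarith [norm_nonneg P, mul_self_nonneg (‖P‖ - 1)]

lemma isOrthProj_proj {r : ℕ} {U : Matrix m (Fin r) ℝ} (h : OrthoCols U) :
    IsOrthProj (U * Uᵀ) := by
  constructor
  · rw [Matrix.transpose_mul, Matrix.transpose_transpose]
  · rw [Matrix.mul_assoc, ← Matrix.mul_assoc Uᵀ U Uᵀ, h, Matrix.one_mul]

lemma rank_proj_le {r : ℕ} (U : Matrix m (Fin r) ℝ) : (U * Uᵀ).rank ≤ r := by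
  refine (Matrix.rank_mul_le_left U Uᵀ).trans ?_
  simpa using U.rank_le_card_width

lemma isOrthProj_one_sub {P : Matrix n n ℝ} (h : IsOrthProj P) : IsOrthProj (1 - P) := by
  constructor
  · rw [Matrix.transpose_sub, Matrix.transpose_one, h.1]
  · rw [Matrix.mul_sub, Matrix.sub_mul, Matrix.sub_mul, Matrix.one_mul, Matrix.mul_one, h.2]
    simp

end MatNorms

section Kron
variable {m₂ n₂ m₃ n₃ : Type*} [Fintype m₂] [Fintype n₂] [Fintype m₃] [Fintype n₃]
variable [DecidableEq m₂] [DecidableEq n₂] [DecidableEq m₃] [DecidableEq n₃]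

lemma norm_kron_one_le (A : Matrix m₂ n₂ ℝ) :
    ‖A ⊗ₖ (1 : Matrix m₃ m₃ ℝ)‖ ≤ ‖A‖ := by
  refine norm_le_of_mulVec (norm_nonneg _) fun v => ?_
  refine enorm2_le_of_sq (norm_nonneg _) ?_
  have key : ∀ (i : m₂) (j : m₃), ((A ⊗ₖ (1 : Matrix m₃ m₃ ℝ)) *ᵥ v) (i, j)
      = (A *ᵥ fun k => v (k, j)) i := by
    intro i j
    simp [Matrix.mulVec, dotProduct, Fintype.sum_prod_type,
      Matrix.kroneckerMap_apply, Matrix.one_apply, mul_ite, mul_one, mul_zero,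
      ite_mul, zero_mul, Finset.sum_ite_eq]
  calc ∑ q : m₂ × m₃, (((A ⊗ₖ (1 : Matrix m₃ m₃ ℝ)) *ᵥ v) q) ^ 2
      = ∑ j : m₃, ∑ i : m₂, ((A *ᵥ fun k => v (k, j)) i) ^ 2 := by
        rw [Fintype.sum_prod_type, Finset.sum_comm]
        exact Finset.sum_congr rfl fun j _ => Finset.sum_congr rfl fun i _ => by rw [key]
  _ ≤ ∑ j : m₃, ‖A‖ ^ 2 * ∑ k : n₂, (v (k, j)) ^ 2 :=
        Finset.sum_le_sum fun j _ => sq_mulVec_le A _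
  _ = ‖A‖ ^ 2 * ∑ q : n₂ × m₃, (v q) ^ 2 := by
        rw [← Finset.mul_sum, Fintype.sum_prod_type, Finset.sum_comm]

lemma norm_one_kron_le (B : Matrix m₃ n₃ ℝ) :
    ‖(1 : Matrix m₂ m₂ ℝ) ⊗ₖ B‖ ≤ ‖B‖ := by
  refine norm_le_of_mulVec (norm_nonneg _) fun v => ?_
  refine enorm2_le_of_sq (norm_nonneg _) ?_
  have key : ∀ (i : m₂) (j : m₃), (((1 : Matrix m₂ m₂ ℝ) ⊗ₖ B) *ᵥ v) (i, j)
      = (B *ᵥ fun k => v (i, k)) j := by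
    intro i j
    simp [Matrix.mulVec, dotProduct, Fintype.sum_prod_type,
      Matrix.kroneckerMap_apply, Matrix.one_apply, mul_ite, mul_one, mul_zero,
      ite_mul, zero_mul, Finset.sum_ite_eq]
  calc ∑ q : m₂ × m₃, ((((1 : Matrix m₂ m₂ ℝ) ⊗ₖ B) *ᵥ v) q) ^ 2
      = ∑ i : m₂, ∑ j : m₃, ((B *ᵥ fun k => v (i, k)) j) ^ 2 := by
        rw [Fintype.sum_prod_type]
        exact Finset.sum_congr rfl fun i _ => Finset.sum_congr rfl fun j _ => by rw [key]
  _ ≤ ∑ i : m₂, ‖B‖ ^ 2 * ∑ k : n₃, (v (i, k)) ^ 2 :=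
        Finset.sum_le_sum fun i _ => sq_mulVec_le B _
  _ = ‖B‖ ^ 2 * ∑ q : m₂ × n₃, (v q) ^ 2 := by
        rw [← Finset.mul_sum, Fintype.sum_prod_type]

lemma norm_kron_le (A : Matrix m₂ n₂ ℝ) (B : Matrix m₃ n₃ ℝ) :
    ‖A ⊗ₖ B‖ ≤ ‖A‖ * ‖B‖ := by
  have h : A ⊗ₖ B = (A ⊗ₖ (1 : Matrix m₃ m₃ ℝ)) * ((1 : Matrix n₂ n₂ ℝ) ⊗ₖ B) := by
    rw [← Matrix.mul_kronecker_mul, Matrix.mul_one, Matrix.one_mul]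
  rw [h]
  exact (norm_mul_le' _ _).trans
    (mul_le_mul (norm_kron_one_le A) (norm_one_kron_le B) (norm_nonneg _) (norm_nonneg _))

lemma sub_kron (A B : Matrix m₂ n₂ ℝ) (C : Matrix m₃ n₃ ℝ) :
    (A - B) ⊗ₖ C = A ⊗ₖ C - B ⊗ₖ C := by
  ext ⟨i, j⟩ ⟨k, l⟩
  simp [Matrix.kroneckerMap_apply, Matrix.sub_apply, sub_mul]

lemma kron_sub (A : Matrix m₂ n₂ ℝ) (B C : Matrix m₃ n₃ ℝ) :
    A ⊗ₖ (B - C) = A ⊗ₖ B - A ⊗ₖ C := by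
  ext ⟨i, j⟩ ⟨k, l⟩
  simp [Matrix.kroneckerMap_apply, Matrix.sub_apply, mul_sub]

lemma kron_transpose (A : Matrix m₂ n₂ ℝ) (B : Matrix m₃ n₃ ℝ) :
    (A ⊗ₖ B)ᵀ = Aᵀ ⊗ₖ Bᵀ :=
  (Matrix.kroneckerMap_transpose _ A B).symm

end Kron

end Stmt14

namespace Stmt14
open scoped Matrix.Norms.L2Operator

section TauP
variable {p₁ p₂ p₃ : ℕ} (r₂ r₃ : ℕ) (Z : Matrix (Fin p₁) (Fin p₂ × Fin p₃) ℝ)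

lemma tauP_bddAbove :
    BddAbove {c | ∃ (P : Matrix (Fin p₂) (Fin p₂) ℝ) (Q : Matrix (Fin p₃) (Fin p₃) ℝ),
      IsOrthProj P ∧ IsOrthProj Q ∧ P.rank ≤ 2 * r₂ ∧ Q.rank ≤ 2 * r₃ ∧
      c = spec (Z * (P ⊗ₖ Q))} := by
  refine ⟨‖Z‖, ?_⟩
  rintro c ⟨P, Q, hP, hQ, _, _, rfl⟩
  rw [spec_eq_norm]
  refine (norm_mul_le' _ _).trans ?_
  refine mul_le_of_le_one_right (norm_nonneg _) ?_
  refine (norm_kron_le P Q).trans ?_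
  exact mul_le_one₀ (isOrthProj_norm_le hP) (norm_nonneg _) (isOrthProj_norm_le hQ)

lemma le_tauP {P : Matrix (Fin p₂) (Fin p₂) ℝ} {Q : Matrix (Fin p₃) (Fin p₃) ℝ}
    (hP : IsOrthProj P) (hQ : IsOrthProj Q) (hrP : P.rank ≤ 2 * r₂) (hrQ : Q.rank ≤ 2 * r₃) :
    ‖Z * (P ⊗ₖ Q)‖ ≤ tauP r₂ r₃ Z := by
  rw [← spec_eq_norm]
  exact le_csSup (tauP_bddAbove r₂ r₃ Z) ⟨P, Q, hP, hQ, hrP, hrQ, rfl⟩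

lemma tauP_nonneg : 0 ≤ tauP r₂ r₃ Z := by
  have h0 : IsOrthProj (0 : Matrix (Fin p₂) (Fin p₂) ℝ) := ⟨Matrix.transpose_zero, by simp⟩
  have h0' : IsOrthProj (0 : Matrix (Fin p₃) (Fin p₃) ℝ) := ⟨Matrix.transpose_zero, by simp⟩
  have hmem : (0:ℝ) ∈ {c | ∃ (P : Matrix (Fin p₂) (Fin p₂) ℝ) (Q : Matrix (Fin p₃) (Fin p₃) ℝ),
      IsOrthProj P ∧ IsOrthProj Q ∧ P.rank ≤ 2 * r₂ ∧ Q.rank ≤ 2 * r₃ ∧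
      c = spec (Z * (P ⊗ₖ Q))} := by
    refine ⟨0, 0, h0, h0', by simp [Matrix.rank_zero], by simp [Matrix.rank_zero], ?_⟩
    rw [spec_eq_norm]
    have : (0 : Matrix (Fin p₂) (Fin p₂) ℝ) ⊗ₖ (0 : Matrix (Fin p₃) (Fin p₃) ℝ) = 0 := by
      ext ⟨i,j⟩ ⟨k,l⟩; simp [Matrix.kroneckerMap_apply]
    rw [this, Matrix.mul_zero, norm_zero]
  exact le_csSup (tauP_bddAbove r₂ r₃ Z) hmem

end TauP

section Proj

set_option maxHeartbeats 1000000 in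
lemma exists_proj_absorb {p r s : ℕ} (A : Matrix (Fin p) (Fin r) ℝ) (B : Matrix (Fin p) (Fin s) ℝ) :
    ∃ K : Matrix (Fin p) (Fin p) ℝ, IsOrthProj K ∧ K.rank ≤ r + s ∧ K * A = A ∧ K * B = B := by
  classical
  let E := EuclideanSpace ℝ (Fin p)
  let g : Fin r ⊕ Fin s → E := Sum.elim
    (fun j => (WithLp.equiv 2 (Fin p → ℝ)).symm (fun i => A i j))
    (fun j => (WithLp.equiv 2 (Fin p → ℝ)).symm (fun i => B i j))
  let S : Submodule ℝ E := Submodule.span ℝ (Set.range g)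
  let d := Module.finrank ℝ S
  have hdle : d ≤ r + s := by
    have h1 := finrank_range_le_card (R := ℝ) g
    simpa [Set.finrank] using h1
  let b := stdOrthonormalBasis ℝ S
  let ψ : S → (Fin p → ℝ) := fun z => WithLp.equiv 2 (Fin p → ℝ) ((z : E))
  let W : Matrix (Fin p) (Fin d) ℝ := fun i j => ψ (b j) i
  have hinner : ∀ z w : S, (inner ℝ z w : ℝ) = ∑ i, ψ z i * ψ w i := by
    intro z w
    rw [Submodule.coe_inner, PiLp.inner_apply]
    simp [RCLike.inner_apply, ψ]
    exact Finset.sum_congr rfl fun i _ => mul_comm _ _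
  have hWtW : Wᵀ * W = 1 := by
    ext j k
    have hON := orthonormal_iff_ite.mp b.orthonormal
    have h2 := hinner (b j) (b k)
    rw [hON j k] at h2
    rw [Matrix.mul_apply, Matrix.one_apply]
    simp only [Matrix.transpose_apply]
    rw [← h2]
  have hfix : ∀ v : Fin p → ℝ, (WithLp.equiv 2 (Fin p → ℝ)).symm v ∈ S →
      (W * Wᵀ) *ᵥ v = v := by
    intro v hv
    set x : S := ⟨(WithLp.equiv 2 (Fin p → ℝ)).symm v, hv⟩ with hxdef
    have hψx : ψ x = v := by
      simp only [ψ, hxdef]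
      exact (WithLp.equiv 2 (Fin p → ℝ)).apply_symm_apply v
    have hsum := b.sum_repr x
    have hcoe : ∑ k, b.repr x k • ((b k : S) : E) = ((x : S) : E) := by
      have h3 := congrArg (Submodule.subtype S) hsum
      simpa [map_sum, _root_.map_smul] using h3
    have hcoe2 : ∑ k, b.repr x k • (ψ (b k)) = ψ x := by
      have h3 := congrArg (WithLp.linearEquiv 2 ℝ (Fin p → ℝ)) hcoe
      rw [map_sum] at h3
      simpa [_root_.map_smul, ψ] using h3
    have hfun : ∀ i, ∑ k, b.repr x k * W i k = v i := by
      intro i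
      have h4 := congrFun hcoe2 i
      rw [Finset.sum_apply] at h4
      simp only [Pi.smul_apply, smul_eq_mul] at h4
      rw [hψx] at h4
      exact h4
    have hrepr : ∀ k, b.repr x k = ∑ i', W i' k * v i' := by
      intro k
      rw [b.repr_apply_apply, hinner (b k) x, hψx]
    ext i
    rw [← Matrix.mulVec_mulVec]
    have h5 : Wᵀ *ᵥ v = fun k => b.repr x k := by
      ext k
      rw [hrepr k]
      simp only [Matrix.mulVec, dotProduct, Matrix.transpose_apply]
    rw [h5]
    simp only [Matrix.mulVec, dotProduct]
    rw [← hfun i]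
    exact Finset.sum_congr rfl fun k _ => mul_comm _ _
  have habs : ∀ {t : ℕ} (C : Matrix (Fin p) (Fin t) ℝ),
      (∀ j, (WithLp.equiv 2 (Fin p → ℝ)).symm (fun i => C i j) ∈ S) → W * Wᵀ * C = C := by
    intro t C hC
    ext i j
    have h6 := congrFun (hfix _ (hC j)) i
    rw [show (W * Wᵀ * C) i j = ((W * Wᵀ) *ᵥ (fun i' => C i' j)) i from by
      simp only [Matrix.mul_apply, Matrix.mulVec, dotProduct]]
    rw [h6]
  refine ⟨W * Wᵀ, ⟨?_, ?_⟩, ?_, ?_, ?_⟩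
  · rw [Matrix.transpose_mul, Matrix.transpose_transpose]
  · rw [Matrix.mul_assoc, ← Matrix.mul_assoc Wᵀ W Wᵀ, hWtW, Matrix.one_mul]
  · refine (Matrix.rank_mul_le_left W Wᵀ).trans ?_
    refine (W.rank_le_card_width).trans ?_
    simpa using hdle
  · exact habs A fun j => Submodule.subset_span ⟨Sum.inl j, rfl⟩
  · exact habs B fun j => Submodule.subset_span ⟨Sum.inr j, rfl⟩

end Proj

end Stmt14

namespace Stmt14
open scoped Matrix.Norms.L2Operator

section MinSV
variable {r : ℕ}

def minsv (B : Matrix (Fin r) (Fin r) ℝ) : ℝ :=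
  sInf {c | ∃ v : Fin r → ℝ, enorm2 v = 1 ∧ c = enorm2 (B *ᵥ v)}

lemma minsv_set_nonempty (hr : 0 < r) (B : Matrix (Fin r) (Fin r) ℝ) :
    {c | ∃ v : Fin r → ℝ, enorm2 v = 1 ∧ c = enorm2 (B *ᵥ v)}.Nonempty :=
  ⟨_, Pi.single ⟨0, hr⟩ 1, enorm2_single _, rfl⟩

lemma minsv_set_bddBelow (B : Matrix (Fin r) (Fin r) ℝ) :
    BddBelow {c | ∃ v : Fin r → ℝ, enorm2 v = 1 ∧ c = enorm2 (B *ᵥ v)} := by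
  refine ⟨0, ?_⟩
  rintro c ⟨v, hv, rfl⟩
  exact enorm2_nonneg _

lemma minsv_nonneg (hr : 0 < r) (B : Matrix (Fin r) (Fin r) ℝ) : 0 ≤ minsv B :=
  le_csInf (minsv_set_nonempty hr B) (by rintro c ⟨v, hv, rfl⟩; exact enorm2_nonneg _)

lemma minsv_le (B : Matrix (Fin r) (Fin r) ℝ) {v : Fin r → ℝ} (hv : enorm2 v = 1) :
    minsv B ≤ enorm2 (B *ᵥ v) :=
  csInf_le (minsv_set_bddBelow B) ⟨v, hv, rfl⟩

lemma minsv_mul_le (hr : 0 < r) (B : Matrix (Fin r) (Fin r) ℝ) (v : Fin r → ℝ) :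
    minsv B * enorm2 v ≤ enorm2 (B *ᵥ v) := by
  rcases eq_or_ne v 0 with rfl | hv
  · simp [enorm2_zero, Matrix.mulVec_zero, enorm2_nonneg]
  · have hpos : 0 < enorm2 v := by
      rcases lt_or_eq_of_le (enorm2_nonneg v) with h | h
      · exact h
      · exact absurd (enorm2_eq_zero_iff.mp h.symm) hv
    have hu : enorm2 ((enorm2 v)⁻¹ • v) = 1 := by
      rw [enorm2_smul, abs_of_pos (inv_pos.mpr hpos), inv_mul_cancel₀ hpos.ne']
    have h1 := minsv_le B hu
    rw [Matrix.mulVec_smul, enorm2_smul, abs_of_pos (inv_pos.mpr hpos)] at h1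
    calc minsv B * enorm2 v ≤ ((enorm2 v)⁻¹ * enorm2 (B *ᵥ v)) * enorm2 v := by
          exact mul_le_mul_of_nonneg_right h1 hpos.le
    _ = enorm2 (B *ᵥ v) := by field_simp
  
lemma minsv_le_one (hr : 0 < r) {B : Matrix (Fin r) (Fin r) ℝ} (hB : ‖B‖ ≤ 1) :
    minsv B ≤ 1 := by
  have h := minsv_le B (enorm2_single (⟨0, hr⟩ : Fin r))
  refine h.trans ?_
  calc enorm2 (B *ᵥ Pi.single ⟨0, hr⟩ 1) ≤ ‖B‖ * enorm2 (Pi.single (⟨0, hr⟩ : Fin r) (1:ℝ)) :=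
        enorm2_mulVec_le _ _
  _ ≤ 1 := by rw [enorm2_single, mul_one]; exact hB

lemma minsv_eq_of_invertible (hr : 0 < r) {B : Matrix (Fin r) (Fin r) ℝ} (hB : IsUnit B.det) :
    minsv B = ‖B⁻¹‖⁻¹ := by
  have hBB : ∀ w : Fin r → ℝ, B *ᵥ (B⁻¹ *ᵥ w) = w := by
    intro w
    rw [Matrix.mulVec_mulVec, Matrix.mul_nonsing_inv _ hB, Matrix.one_mulVec]
  have hBB' : ∀ w : Fin r → ℝ, B⁻¹ *ᵥ (B *ᵥ w) = w := by
    intro w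
    rw [Matrix.mulVec_mulVec, Matrix.nonsing_inv_mul _ hB, Matrix.one_mulVec]
  have hinv_pos : 0 < ‖B⁻¹‖ := by
    rcases lt_or_eq_of_le (norm_nonneg B⁻¹) with h | h
    · exact h
    · exfalso
      have h1 := enorm2_mulVec_le B⁻¹ (B *ᵥ Pi.single ⟨0, hr⟩ 1)
      rw [hBB', ← h, zero_mul] at h1
      have := enorm2_single (⟨0, hr⟩ : Fin r)
      rw [this] at h1
      linarith
  have hge : ‖B⁻¹‖⁻¹ ≤ minsv B := by
    refine le_csInf (minsv_set_nonempty hr B) ?_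
    rintro c ⟨v, hv, rfl⟩
    have h1 := enorm2_mulVec_le B⁻¹ (B *ᵥ v)
    rw [hBB', hv] at h1
    rw [inv_le_iff_one_le_mul₀ hinv_pos]
    linarith [mul_comm ‖B⁻¹‖ (enorm2 (B *ᵥ v))]
  have hmpos : 0 < minsv B := lt_of_lt_of_le (inv_pos.mpr hinv_pos) hge
  have hle : ‖B⁻¹‖ ≤ (minsv B)⁻¹ := by
    refine norm_le_of_mulVec (inv_nonneg.mpr hmpos.le) fun w => ?_
    have h1 := minsv_mul_le hr B (B⁻¹ *ᵥ w)
    rw [hBB] at h1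
    rw [← mul_le_mul_iff_right₀ hmpos, ← mul_assoc, mul_inv_cancel₀ hmpos.ne', one_mul]
    exact h1
  have hle' : minsv B ≤ ‖B⁻¹‖⁻¹ := by
    have := inv_anti₀ hinv_pos hle
    rwa [inv_inv] at this
  exact le_antisymm hle' hge

lemma minsv_transpose (hr : 0 < r) (B : Matrix (Fin r) (Fin r) ℝ) :
    minsv Bᵀ = minsv B := by
  by_cases hB : IsUnit B.det
  · have hBt : IsUnit Bᵀ.det := by rwa [Matrix.det_transpose]
    rw [minsv_eq_of_invertible hr hB, minsv_eq_of_invertible hr hBt]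
    rw [← Matrix.transpose_nonsing_inv, norm_transpose]
  · have hdet : B.det = 0 := by
      by_contra h
      exact hB (isUnit_iff_ne_zero.mpr h)
    have hzero : ∀ (C : Matrix (Fin r) (Fin r) ℝ), C.det = 0 → minsv C = 0 := by
      intro C hC
      obtain ⟨v, hv0, hCv⟩ := (Matrix.exists_mulVec_eq_zero_iff).mpr hC
      have hpos : 0 < enorm2 v := by
        rcases lt_or_eq_of_le (enorm2_nonneg v) with h | h
        · exact h
        · exact absurd (enorm2_eq_zero_iff.mp h.symm) hv0
      have hu : enorm2 ((enorm2 v)⁻¹ • v) = 1 := by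
        rw [enorm2_smul, abs_of_pos (inv_pos.mpr hpos), inv_mul_cancel₀ hpos.ne']
      have h1 := minsv_le C hu
      rw [Matrix.mulVec_smul, hCv, smul_zero, enorm2_zero] at h1
      exact le_antisymm h1 (minsv_nonneg hr C)
    rw [hzero B hdet, hzero Bᵀ (by rw [Matrix.det_transpose]; exact hdet)]

end MinSV

end Stmt14

namespace Stmt14
open scoped Matrix.Norms.L2Operator

section SinThetaSym

lemma sq_sum_mulVec {m n : Type*} [Fintype m] [Fintype n] (M : Matrix m n ℝ) (x : n → ℝ) :
    ∑ i, ((M *ᵥ x) i) ^ 2 = x ⬝ᵥ ((Mᵀ * M) *ᵥ x) := by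
  have h1 : ∑ i, ((M *ᵥ x) i) ^ 2 = (M *ᵥ x) ⬝ᵥ (M *ᵥ x) := by
    simp [dotProduct, sq]
  rw [h1, Matrix.dotProduct_mulVec, ← Matrix.mulVec_transpose, Matrix.mulVec_mulVec,
    ← dotProduct_comm]

lemma norm_empty_cols {p : ℕ} (M : Matrix (Fin p) (Fin 0) ℝ) : ‖M‖ = 0 := by
  refine le_antisymm (norm_le_of_mulVec le_rfl fun v => ?_) (norm_nonneg M)
  have hz : M *ᵥ v = 0 := by
    ext i; simp [Matrix.mulVec, dotProduct]
  rw [hz, enorm2_zero, zero_mul]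

lemma norm_proj_compl_eq {p r : ℕ} (hr : 0 < r) {U V : Matrix (Fin p) (Fin r) ℝ}
    (hU : OrthoCols U) (hV : OrthoCols V) :
    ‖(1 - V * Vᵀ) * U‖ = Real.sqrt (1 - minsv (Vᵀ * U) ^ 2) := by
  set G := (1 - V * Vᵀ) * U with hGdef
  set B := Vᵀ * U with hBdef
  have hPP : (V * Vᵀ) * (V * Vᵀ) = V * Vᵀ := (isOrthProj_proj hV).2
  have hproj : IsOrthProj (1 - V * Vᵀ) := isOrthProj_one_sub (isOrthProj_proj hV)
  have hGtG : Gᵀ * G = 1 - Bᵀ * B := by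
    rw [hGdef, hBdef]
    rw [Matrix.transpose_mul, Matrix.transpose_sub, Matrix.transpose_one,
      (isOrthProj_proj hV).1]
    have h2 : (1 - V * Vᵀ) * ((1 - V * Vᵀ) * U) = (1 - V * Vᵀ) * U := by
      rw [← Matrix.mul_assoc, hproj.2]
    rw [Matrix.mul_assoc Uᵀ, h2]
    rw [Matrix.sub_mul, Matrix.one_mul, Matrix.mul_sub, hU]
    congr 1
    rw [Matrix.transpose_mul, Matrix.transpose_transpose]
    simp only [Matrix.mul_assoc]
  have hesq : ∀ x : Fin r → ℝ,
      ∑ i, ((G *ᵥ x) i) ^ 2 = ∑ i, (x i) ^ 2 - ∑ i, ((B *ᵥ x) i) ^ 2 := by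
    intro x
    rw [sq_sum_mulVec, sq_sum_mulVec, hGtG, Matrix.sub_mulVec, Matrix.one_mulVec,
      dotProduct_sub]
    congr 1
    simp [dotProduct, sq]
  have hB1 : ‖B‖ ≤ 1 := by
    rw [hBdef]
    refine (norm_mul_le' _ _).trans ?_
    refine mul_le_one₀ ?_ (norm_nonneg _) (orthoCols_norm_le hU)
    rw [norm_transpose]; exact orthoCols_norm_le hV
  have hG1 : ‖G‖ ≤ 1 := by
    rw [hGdef]
    refine (norm_mul_le' _ _).trans ?_
    exact mul_le_one₀ (isOrthProj_norm_le hproj) (norm_nonneg _) (orthoCols_norm_le hU)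
  have hm0 : 0 ≤ minsv B := minsv_nonneg hr B
  have hm1 : minsv B ≤ 1 := minsv_le_one hr hB1
  have h1m : 0 ≤ 1 - minsv B ^ 2 := by nlinarith
  have ht : 0 ≤ 1 - ‖G‖ ^ 2 := by nlinarith [norm_nonneg G]
  refine le_antisymm ?_ ?_
  · refine norm_le_of_mulVec (Real.sqrt_nonneg _) fun x => ?_
    refine enorm2_le_of_sq (Real.sqrt_nonneg _) ?_
    rw [Real.sq_sqrt h1m, hesq x]
    have h2 := minsv_mul_le hr B x
    have h3 : (minsv B * enorm2 x) ^ 2 ≤ (enorm2 (B *ᵥ x)) ^ 2 :=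
      pow_le_pow_left₀ (mul_nonneg hm0 (enorm2_nonneg _)) h2 2
    rw [mul_pow, sq_enorm2, sq_enorm2] at h3
    nlinarith [Finset.sum_nonneg (fun i (_ : i ∈ Finset.univ) => sq_nonneg (x i))]
  · have hstep : Real.sqrt (1 - ‖G‖ ^ 2) ≤ minsv B := by
      refine le_csInf (minsv_set_nonempty hr B) ?_
      rintro c ⟨v, hv, rfl⟩
      have h4 : ∑ i, ((G *ᵥ v) i) ^ 2 ≤ ‖G‖ ^ 2 := by
        have := sq_mulVec_le G v
        rw [← sq_enorm2 v, hv] at this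
        simpa using this
      have h5 : 1 - ‖G‖ ^ 2 ≤ ∑ i, ((B *ᵥ v) i) ^ 2 := by
        have h6 := hesq v
        have h7 : ∑ i, (v i) ^ 2 = 1 := by rw [← sq_enorm2, hv]; norm_num
        rw [h7] at h6
        linarith
      calc Real.sqrt (1 - ‖G‖ ^ 2) ≤ Real.sqrt (∑ i, ((B *ᵥ v) i) ^ 2) :=
            Real.sqrt_le_sqrt h5
      _ = enorm2 (B *ᵥ v) := rfl
    have h8 : 1 - ‖G‖ ^ 2 ≤ minsv B ^ 2 := by
      have := pow_le_pow_left₀ (Real.sqrt_nonneg _) hstep 2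
      rwa [Real.sq_sqrt ht] at this
    have h9 : 1 - minsv B ^ 2 ≤ ‖G‖ ^ 2 := by linarith
    calc Real.sqrt (1 - minsv B ^ 2) ≤ Real.sqrt (‖G‖ ^ 2) := Real.sqrt_le_sqrt h9
    _ = ‖G‖ := Real.sqrt_sq (norm_nonneg G)

lemma norm_proj_compl_comm {p r : ℕ} {U V : Matrix (Fin p) (Fin r) ℝ}
    (hU : OrthoCols U) (hV : OrthoCols V) :
    ‖(1 - V * Vᵀ) * U‖ = ‖(1 - U * Uᵀ) * V‖ := by
  rcases Nat.eq_zero_or_pos r with rfl | hr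
  · rw [norm_empty_cols, norm_empty_cols]
  · rw [norm_proj_compl_eq hr hU hV, norm_proj_compl_eq hr hV hU]
    have : Uᵀ * V = (Vᵀ * U)ᵀ := by
      rw [Matrix.transpose_mul, Matrix.transpose_transpose]
    rw [this, minsv_transpose hr]

end SinThetaSym

section Sval

lemma sval_mulVec {q : ℕ} (L : Matrix (Fin q) (Fin q) ℝ) {c : ℝ} (hc : c ≤ sval L q)
    (v : Fin q → ℝ) : c * enorm2 v ≤ enorm2 (L *ᵥ v) := by
  set T := {c | 0 ≤ c ∧ ∃ V : Submodule ℝ (Fin q → ℝ), Module.finrank ℝ V = q ∧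
      ∀ v ∈ V, c * enorm2 v ≤ enorm2 (L.mulVec v)} with hT
  have hne : T.Nonempty := by
    refine ⟨0, le_rfl, ⊤, ?_, ?_⟩
    · rw [finrank_top]; simp [Module.finrank_fin_fun]
    · intro v _; rw [zero_mul]; exact enorm2_nonneg _
  have hall : ∀ a ∈ T, a * enorm2 v ≤ enorm2 (L *ᵥ v) := by
    rintro a ⟨ha0, V, hVrank, hV⟩
    have hVtop : V = ⊤ := by
      apply Submodule.eq_top_of_finrank_eq
      rw [hVrank]; simp [Module.finrank_fin_fun]
    exact hV v (hVtop ▸ Submodule.mem_top)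
  rcases eq_or_ne v 0 with rfl | hv
  · simp [enorm2_zero, Matrix.mulVec_zero, enorm2_nonneg]
  · have hpos : 0 < enorm2 v := by
      rcases lt_or_eq_of_le (enorm2_nonneg v) with h | h
      · exact h
      · exact absurd (enorm2_eq_zero_iff.mp h.symm) hv
    have hsup : sval L q ≤ enorm2 (L *ᵥ v) / enorm2 v := by
      refine csSup_le hne ?_
      intro a ha
      rw [le_div_iff₀ hpos]
      exact hall a ha
    have := hc.trans hsup
    rw [← le_div_iff₀ hpos]
    exact this

lemma norm_inv_le_of_sval {q : ℕ} {L : Matrix (Fin q) (Fin q) ℝ} (hL : IsUnit L.det)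
    {c : ℝ} (hc0 : 0 < c) (hc : c ≤ sval L q) : ‖L⁻¹‖ ≤ c⁻¹ := by
  refine norm_le_of_mulVec (inv_nonneg.mpr hc0.le) fun w => ?_
  have h1 := sval_mulVec L hc (L⁻¹ *ᵥ w)
  rw [Matrix.mulVec_mulVec, Matrix.mul_nonsing_inv _ hL, Matrix.one_mulVec] at h1
  rw [← mul_le_mul_iff_right₀ hc0, ← mul_assoc, mul_inv_cancel₀ hc0.ne', one_mul]
  exact h1

end Sval

section TwoInf

lemma row_le_twoInf {m n : Type*} [Fintype m] [Fintype n] (M : Matrix m n ℝ) (i : m) :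
    enorm2 (M i) ≤ twoInf M := by
  have hbdd : BddAbove {c | ∃ i, c = enorm2 (M i)} := by
    have : {c | ∃ i, c = enorm2 (M i)} = Set.range (fun i => enorm2 (M i)) := by
      ext c; simp [eq_comm]
    rw [this]
    exact (Set.finite_range _).bddAbove
  exact le_csSup hbdd ⟨i, rfl⟩

end TwoInf

end Stmt14

namespace Stmt14
open scoped Matrix.Norms.L2Operator

section Key
variable {p₁ p₂ p₃ r₂ r₃ : ℕ}

lemma key_decomp (P2 Ph2 : Matrix (Fin p₂) (Fin p₂) ℝ) (P3 Ph3 : Matrix (Fin p₃) (Fin p₃) ℝ) :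
    (1 - P2 ⊗ₖ P3) * (Ph2 ⊗ₖ Ph3)
      = ((1 - P2) * Ph2) ⊗ₖ Ph3 + (P2 * Ph2) ⊗ₖ ((1 - P3) * Ph3) := by
  have e1 : (1 - P2) * Ph2 = Ph2 - P2 * Ph2 := by rw [Matrix.sub_mul, Matrix.one_mul]
  have e2 : (1 - P3) * Ph3 = Ph3 - P3 * Ph3 := by rw [Matrix.sub_mul, Matrix.one_mul]
  rw [e1, e2, sub_kron, kron_sub, Matrix.sub_mul, Matrix.one_mul, ← Matrix.mul_kronecker_mul]
  abel

lemma norm_projkron_le_one {q₂ q₃ : ℕ} {U2 : Matrix (Fin p₂) (Fin q₂) ℝ}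
    {U3 : Matrix (Fin p₃) (Fin q₃) ℝ} (h2 : OrthoCols U2) (h3 : OrthoCols U3) :
    ‖(U2 * U2ᵀ) ⊗ₖ (U3 * U3ᵀ)‖ ≤ 1 := by
  refine (norm_kron_le _ _).trans ?_
  exact mul_le_one₀ (isOrthProj_norm_le (isOrthProj_proj h2)) (norm_nonneg _)
    (isOrthProj_norm_le (isOrthProj_proj h3))

lemma key2 (Z : Matrix (Fin p₁) (Fin p₂ × Fin p₃) ℝ)
    (W2 : Matrix (Fin p₂) (Fin r₂) ℝ) (W3 : Matrix (Fin p₃) (Fin r₃) ℝ)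
    (Uh2 : Matrix (Fin p₂) (Fin r₂) ℝ) (Uh3 : Matrix (Fin p₃) (Fin r₃) ℝ)
    (hW2 : OrthoCols W2) (hW3 : OrthoCols W3) (hUh2 : OrthoCols Uh2) (hUh3 : OrthoCols Uh3) :
    ‖Z * ((1 - (W2 * W2ᵀ) ⊗ₖ (W3 * W3ᵀ)) * ((Uh2 * Uh2ᵀ) ⊗ₖ (Uh3 * Uh3ᵀ)))‖ ≤
      tauP r₂ r₃ Z * (‖(1 - W2 * W2ᵀ) * Uh2‖ + ‖(1 - W3 * W3ᵀ) * Uh3‖) := by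
  obtain ⟨K2, hK2p, hK2r, hK2W, hK2U⟩ := exists_proj_absorb W2 Uh2
  obtain ⟨K3, hK3p, hK3r, hK3W, hK3U⟩ := exists_proj_absorb W3 Uh3
  have hK2r' : K2.rank ≤ 2 * r₂ := hK2r.trans (by omega)
  have hK3r' : K3.rank ≤ 2 * r₃ := hK3r.trans (by omega)
  have hτ0 : 0 ≤ tauP r₂ r₃ Z := tauP_nonneg r₂ r₃ Z
  set s2 := ‖(1 - W2 * W2ᵀ) * Uh2‖ with hs2
  set s3 := ‖(1 - W3 * W3ᵀ) * Uh3‖ with hs3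
  have hs20 : 0 ≤ s2 := norm_nonneg _
  have hs30 : 0 ≤ s3 := norm_nonneg _
  -- first piece
  have habs1 : K2 * ((1 - W2 * W2ᵀ) * (Uh2 * Uh2ᵀ)) = (1 - W2 * W2ᵀ) * (Uh2 * Uh2ᵀ) := by
    rw [Matrix.sub_mul, Matrix.one_mul, Matrix.mul_sub, ← Matrix.mul_assoc K2 Uh2 Uh2ᵀ, hK2U]
    congr 1
    simp only [← Matrix.mul_assoc]
    rw [hK2W]
  have hT1norm : ‖(1 - W2 * W2ᵀ) * (Uh2 * Uh2ᵀ)‖ ≤ s2 := by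
    rw [← Matrix.mul_assoc]
    refine (norm_mul_le' _ _).trans ?_
    refine mul_le_of_le_one_right hs20 ?_
    rw [norm_transpose]
    exact orthoCols_norm_le hUh2
  have hfact1 : ((1 - W2 * W2ᵀ) * (Uh2 * Uh2ᵀ)) ⊗ₖ (Uh3 * Uh3ᵀ)
      = (K2 ⊗ₖ (Uh3 * Uh3ᵀ)) * (((1 - W2 * W2ᵀ) * (Uh2 * Uh2ᵀ)) ⊗ₖ (Uh3 * Uh3ᵀ)) := by
    rw [← Matrix.mul_kronecker_mul, habs1, (isOrthProj_proj hUh3).2]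
  have hb1 : ‖Z * (((1 - W2 * W2ᵀ) * (Uh2 * Uh2ᵀ)) ⊗ₖ (Uh3 * Uh3ᵀ))‖ ≤ tauP r₂ r₃ Z * s2 := by
    calc ‖Z * (((1 - W2 * W2ᵀ) * (Uh2 * Uh2ᵀ)) ⊗ₖ (Uh3 * Uh3ᵀ))‖
        = ‖(Z * (K2 ⊗ₖ (Uh3 * Uh3ᵀ))) * (((1 - W2 * W2ᵀ) * (Uh2 * Uh2ᵀ)) ⊗ₖ (Uh3 * Uh3ᵀ))‖ := by
          rw [Matrix.mul_assoc, ← hfact1]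
    _ ≤ ‖Z * (K2 ⊗ₖ (Uh3 * Uh3ᵀ))‖ * ‖((1 - W2 * W2ᵀ) * (Uh2 * Uh2ᵀ)) ⊗ₖ (Uh3 * Uh3ᵀ)‖ :=
          norm_mul_le' _ _
    _ ≤ tauP r₂ r₃ Z * s2 := by
          refine mul_le_mul ?_ ?_ (norm_nonneg _) hτ0
          · exact le_tauP r₂ r₃ Z hK2p (isOrthProj_proj hUh3) hK2r'
              ((rank_proj_le Uh3).trans (by omega))
          · refine (norm_kron_le _ _).trans ?_
            refine (mul_le_of_le_one_right (norm_nonneg _) ?_).trans hT1norm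
            exact isOrthProj_norm_le (isOrthProj_proj hUh3)
  -- second piece
  have habs2 : K3 * ((1 - W3 * W3ᵀ) * (Uh3 * Uh3ᵀ)) = (1 - W3 * W3ᵀ) * (Uh3 * Uh3ᵀ) := by
    rw [Matrix.sub_mul, Matrix.one_mul, Matrix.mul_sub, ← Matrix.mul_assoc K3 Uh3 Uh3ᵀ, hK3U]
    congr 1
    simp only [← Matrix.mul_assoc]
    rw [hK3W]
  have habs2L : (W2 * W2ᵀ) * ((W2 * W2ᵀ) * (Uh2 * Uh2ᵀ)) = (W2 * W2ᵀ) * (Uh2 * Uh2ᵀ) := by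
    rw [← Matrix.mul_assoc, (isOrthProj_proj hW2).2]
  have hT2norm : ‖(1 - W3 * W3ᵀ) * (Uh3 * Uh3ᵀ)‖ ≤ s3 := by
    rw [← Matrix.mul_assoc]
    refine (norm_mul_le' _ _).trans ?_
    refine mul_le_of_le_one_right hs30 ?_
    rw [norm_transpose]
    exact orthoCols_norm_le hUh3
  have hfact2 : ((W2 * W2ᵀ) * (Uh2 * Uh2ᵀ)) ⊗ₖ ((1 - W3 * W3ᵀ) * (Uh3 * Uh3ᵀ))
      = ((W2 * W2ᵀ) ⊗ₖ K3) *
        (((W2 * W2ᵀ) * (Uh2 * Uh2ᵀ)) ⊗ₖ ((1 - W3 * W3ᵀ) * (Uh3 * Uh3ᵀ))) := by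
    rw [← Matrix.mul_kronecker_mul, habs2L, habs2]
  have hb2 : ‖Z * (((W2 * W2ᵀ) * (Uh2 * Uh2ᵀ)) ⊗ₖ ((1 - W3 * W3ᵀ) * (Uh3 * Uh3ᵀ)))‖
      ≤ tauP r₂ r₃ Z * s3 := by
    calc ‖Z * (((W2 * W2ᵀ) * (Uh2 * Uh2ᵀ)) ⊗ₖ ((1 - W3 * W3ᵀ) * (Uh3 * Uh3ᵀ)))‖
        = ‖(Z * ((W2 * W2ᵀ) ⊗ₖ K3)) *
            (((W2 * W2ᵀ) * (Uh2 * Uh2ᵀ)) ⊗ₖ ((1 - W3 * W3ᵀ) * (Uh3 * Uh3ᵀ)))‖ := by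
          rw [Matrix.mul_assoc Z ((W2 * W2ᵀ) ⊗ₖ K3), ← hfact2]
    _ ≤ ‖Z * ((W2 * W2ᵀ) ⊗ₖ K3)‖ *
          ‖((W2 * W2ᵀ) * (Uh2 * Uh2ᵀ)) ⊗ₖ ((1 - W3 * W3ᵀ) * (Uh3 * Uh3ᵀ))‖ := norm_mul_le' _ _
    _ ≤ tauP r₂ r₃ Z * s3 := by
          refine mul_le_mul ?_ ?_ (norm_nonneg _) hτ0
          · exact le_tauP r₂ r₃ Z (isOrthProj_proj hW2) hK3p
              ((rank_proj_le W2).trans (by omega)) hK3r'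
          · refine (norm_kron_le _ _).trans ?_
            have hleft : ‖(W2 * W2ᵀ) * (Uh2 * Uh2ᵀ)‖ ≤ 1 := by
              refine (norm_mul_le' _ _).trans ?_
              exact mul_le_one₀ (isOrthProj_norm_le (isOrthProj_proj hW2)) (norm_nonneg _)
                (isOrthProj_norm_le (isOrthProj_proj hUh2))
            calc ‖(W2 * W2ᵀ) * (Uh2 * Uh2ᵀ)‖ * ‖(1 - W3 * W3ᵀ) * (Uh3 * Uh3ᵀ)‖
                ≤ 1 * s3 := mul_le_mul hleft hT2norm (norm_nonneg _) zero_le_one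
            _ = s3 := one_mul s3
  calc ‖Z * ((1 - (W2 * W2ᵀ) ⊗ₖ (W3 * W3ᵀ)) * ((Uh2 * Uh2ᵀ) ⊗ₖ (Uh3 * Uh3ᵀ)))‖
      = ‖Z * (((1 - W2 * W2ᵀ) * (Uh2 * Uh2ᵀ)) ⊗ₖ (Uh3 * Uh3ᵀ))
          + Z * (((W2 * W2ᵀ) * (Uh2 * Uh2ᵀ)) ⊗ₖ ((1 - W3 * W3ᵀ) * (Uh3 * Uh3ᵀ)))‖ := by
        rw [key_decomp, Matrix.mul_add]
  _ ≤ ‖Z * (((1 - W2 * W2ᵀ) * (Uh2 * Uh2ᵀ)) ⊗ₖ (Uh3 * Uh3ᵀ))‖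
        + ‖Z * (((W2 * W2ᵀ) * (Uh2 * Uh2ᵀ)) ⊗ₖ ((1 - W3 * W3ᵀ) * (Uh3 * Uh3ᵀ)))‖ :=
        norm_add_le _ _
  _ ≤ tauP r₂ r₃ Z * s2 + tauP r₂ r₃ Z * s3 := add_le_add hb1 hb2
  _ = tauP r₂ r₃ Z * (s2 + s3) := by ring

lemma key1 {r₁ : ℕ} (Z : Matrix (Fin p₁) (Fin p₂ × Fin p₃) ℝ)
    (U1 : Matrix (Fin p₁) (Fin r₁) ℝ)
    (U2 : Matrix (Fin p₂) (Fin r₂) ℝ) (U3 : Matrix (Fin p₃) (Fin r₃) ℝ)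
    (Uh2 : Matrix (Fin p₂) (Fin r₂) ℝ) (Uh3 : Matrix (Fin p₃) (Fin r₃) ℝ)
    (hU1 : OrthoCols U1) (hU2 : OrthoCols U2) (hU3 : OrthoCols U3)
    (hUh2 : OrthoCols Uh2) (hUh3 : OrthoCols Uh3) :
    ‖U1ᵀ * Z * ((Uh2 * Uh2ᵀ) ⊗ₖ (Uh3 * Uh3ᵀ))‖ ≤
      tauP r₂ r₃ Z * (‖(1 - U2 * U2ᵀ) * Uh2‖ + ‖(1 - U3 * U3ᵀ) * Uh3‖)
        + ‖U1ᵀ * Z * ((U2 * U2ᵀ) ⊗ₖ (U3 * U3ᵀ))‖ := by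
  have hid : U1ᵀ * Z * ((Uh2 * Uh2ᵀ) ⊗ₖ (Uh3 * Uh3ᵀ))
      = U1ᵀ * (Z * ((1 - (U2 * U2ᵀ) ⊗ₖ (U3 * U3ᵀ)) * ((Uh2 * Uh2ᵀ) ⊗ₖ (Uh3 * Uh3ᵀ))))
        + (U1ᵀ * Z * ((U2 * U2ᵀ) ⊗ₖ (U3 * U3ᵀ))) * ((Uh2 * Uh2ᵀ) ⊗ₖ (Uh3 * Uh3ᵀ)) := by
    simp only [Matrix.sub_mul, Matrix.mul_sub, Matrix.one_mul, Matrix.mul_assoc]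
    abel
  rw [hid]
  refine (norm_add_le _ _).trans (add_le_add ?_ ?_)
  · refine (norm_mul_le' _ _).trans ?_
    refine (mul_le_of_le_one_left (norm_nonneg _) ?_).trans ?_
    · rw [norm_transpose]; exact orthoCols_norm_le hU1
    · exact key2 Z U2 U3 Uh2 Uh3 hU2 hU3 hUh2 hUh3
  · refine (norm_mul_le' _ _).trans ?_
    exact mul_le_of_le_one_right (norm_nonneg _) (norm_projkron_le_one hUh2 hUh3)

end Key

end Stmt14

open Stmt14
open scoped Matrix.Norms.L2Operator
set_option maxHeartbeats 2000000 in
/-- deterministic bound for the quadratic term. -/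
theorem stmt14 {p₁ p₂ p₃ r₁ r₂ r₃ : ℕ}
    (lam : ℝ) (hlam : 0 < lam)
    (T1 : Matrix (Fin p₁) (Fin p₂ × Fin p₃) ℝ)
    (U1 : Matrix (Fin p₁) (Fin r₁) ℝ) (L1 : Matrix (Fin r₁) (Fin r₁) ℝ)
    (V1 : Matrix (Fin p₂ × Fin p₃) (Fin r₁) ℝ)
    (hSVD : IsCompactSVD T1 U1 L1 V1) (hsr : lam ≤ sval T1 r₁)
    (U2 : Matrix (Fin p₂) (Fin r₂) ℝ) (U3 : Matrix (Fin p₃) (Fin r₃) ℝ)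
    (hU2 : OrthoCols U2) (hU3 : OrthoCols U3)
    (hV : ((U2 * U2ᵀ) ⊗ₖ (U3 * U3ᵀ)) * V1 = V1)
    (Z1 : Matrix (Fin p₁) (Fin p₂ × Fin p₃) ℝ)
    (Uh2 : Matrix (Fin p₂) (Fin r₂) ℝ) (Uh3 : Matrix (Fin p₃) (Fin r₃) ℝ)
    (Ut2 : Matrix (Fin p₂) (Fin r₂) ℝ) (Ut3 : Matrix (Fin p₃) (Fin r₃) ℝ)
    (hUh2 : OrthoCols Uh2) (hUh3 : OrthoCols Uh3)
    (hUt2 : OrthoCols Ut2) (hUt3 : OrthoCols Ut3)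
    (Uh1 : Matrix (Fin p₁) (Fin r₁) ℝ) (hUh1 : OrthoCols Uh1)
    (Lh : Matrix (Fin r₁) (Fin r₁) ℝ) (hLh : IsUnit Lh.det)
    (hLhs : lam / 2 ≤ sval Lh r₁)
    (m : Fin p₁) :
    enorm2 ((((1 - U1 * U1ᵀ) * Z1 * ((Uh2 * Uh2ᵀ) ⊗ₖ (Uh3 * Uh3ᵀ)) * Z1ᵀ * Uh1 *
        (Lh⁻¹ * Lh⁻¹) : Matrix (Fin p₁) (Fin r₁) ℝ)) m) ≤
      (4 / lam ^ 2) * twoInf U1 * tauP r₂ r₃ Z1 *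
          (tauP r₂ r₃ Z1 * (sinTheta U2 Uh2 + sinTheta U3 Uh3) +
            spec (U1ᵀ * Z1 * ((U2 * U2ᵀ) ⊗ₖ (U3 * U3ᵀ)))) +
        (16 / lam ^ 2) * (tauP r₂ r₃ Z1) ^ 2 * (sinTheta Ut2 Uh2 + sinTheta Ut3 Uh3) +
        (4 / lam ^ 2) *
          enorm2 ((Z1 * ((Ut2 * Ut2ᵀ) ⊗ₖ (Ut3 * Ut3ᵀ)) :
              Matrix (Fin p₁) (Fin p₂ × Fin p₃) ℝ) m) *
          (tauP r₂ r₃ Z1 * sinTheta Uh1 U1 +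
            tauP r₂ r₃ Z1 * (sinTheta U2 Uh2 + sinTheta U3 Uh3) +
            spec (U1ᵀ * Z1 * ((U2 * U2ᵀ) ⊗ₖ (U3 * U3ᵀ)))) := by
  classical
  have hU1 : OrthoCols U1 := hSVD.1
  simp only [sinTheta, spec_eq_norm]
  set Ph : Matrix (Fin p₂ × Fin p₃) (Fin p₂ × Fin p₃) ℝ := (Uh2 * Uh2ᵀ) ⊗ₖ (Uh3 * Uh3ᵀ) with hPh
  set Pt : Matrix (Fin p₂ × Fin p₃) (Fin p₂ × Fin p₃) ℝ := (Ut2 * Ut2ᵀ) ⊗ₖ (Ut3 * Ut3ᵀ) with hPt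
  set tau := tauP r₂ r₃ Z1 with htaudef
  set eta := ‖(1 - U2 * U2ᵀ) * Uh2‖ + ‖(1 - U3 * U3ᵀ) * Uh3‖ with hetadef
  set etat := ‖(1 - Ut2 * Ut2ᵀ) * Uh2‖ + ‖(1 - Ut3 * Ut3ᵀ) * Uh3‖ with hetatdef
  set beta := ‖U1ᵀ * Z1 * ((U2 * U2ᵀ) ⊗ₖ (U3 * U3ᵀ))‖ with hbetadef
  set s1 := ‖(1 - Uh1 * Uh1ᵀ) * U1‖ with hs1def
  set xi := enorm2 ((Z1 * Pt) m) with hxidef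
  have htau0 : 0 ≤ tau := by rw [htaudef]; exact tauP_nonneg r₂ r₃ Z1
  have heta0 : 0 ≤ eta := by
    rw [hetadef]; exact add_nonneg (norm_nonneg _) (norm_nonneg _)
  have hetat0 : 0 ≤ etat := by
    rw [hetatdef]; exact add_nonneg (norm_nonneg _) (norm_nonneg _)
  have hbeta0 : 0 ≤ beta := by rw [hbetadef]; exact norm_nonneg _
  have hs10 : 0 ≤ s1 := by rw [hs1def]; exact norm_nonneg _
  have h4l : (0:ℝ) ≤ 4 / lam ^ 2 := by positivity
  have htaueb0 : 0 ≤ tau * eta + beta := add_nonneg (mul_nonneg htau0 heta0) hbeta0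
  have hxi0 : 0 ≤ xi := by rw [hxidef]; exact enorm2_nonneg _
  have htw0 : 0 ≤ twoInf U1 := (enorm2_nonneg _).trans (row_le_twoInf U1 m)
  have hlam2pos : (0:ℝ) < lam / 2 := by linarith
  have hlamsq : (0:ℝ) < lam ^ 2 := by positivity
  have hLinv : ‖Lh⁻¹‖ ≤ (lam / 2)⁻¹ := norm_inv_le_of_sval hLh hlam2pos hLhs
  have hL2 : ‖Lh⁻¹ * Lh⁻¹‖ ≤ 4 / lam ^ 2 := by
    refine (Stmt14.norm_mul_le' _ _).trans ?_
    have h0 : (0:ℝ) ≤ (lam / 2)⁻¹ := by positivity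
    calc ‖Lh⁻¹‖ * ‖Lh⁻¹‖ ≤ (lam / 2)⁻¹ * (lam / 2)⁻¹ :=
          mul_le_mul hLinv hLinv (norm_nonneg _) h0
    _ = 4 / lam ^ 2 := by field_simp; ring
  have hPhproj : IsOrthProj Ph := by
    constructor
    · rw [hPh, kron_transpose, (isOrthProj_proj hUh2).1, (isOrthProj_proj hUh3).1]
    · rw [hPh, ← Matrix.mul_kronecker_mul, (isOrthProj_proj hUh2).2, (isOrthProj_proj hUh3).2]
  have hPhPh : Ph * Ph = Ph := hPhproj.2
  have hPhT : Phᵀ = Ph := hPhproj.1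
  have hZPh : ‖Z1 * Ph‖ ≤ tau := by
    rw [hPh, htaudef]
    exact le_tauP r₂ r₃ Z1 (isOrthProj_proj hUh2) (isOrthProj_proj hUh3)
      ((rank_proj_le Uh2).trans (by omega)) ((rank_proj_le Uh3).trans (by omega))
  have hPhZt : ‖Ph * Z1ᵀ‖ ≤ tau := by
    have heq : Ph * Z1ᵀ = (Z1 * Ph)ᵀ := by rw [Matrix.transpose_mul, hPhT]
    rw [heq, Stmt14.norm_transpose]
    exact hZPh
  have hK1 : ‖U1ᵀ * Z1 * Ph‖ ≤ tau * eta + beta := by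
    rw [hPh, htaudef, hetadef, hbetadef]
    exact key1 Z1 U1 U2 U3 Uh2 Uh3 hU1 hU2 hU3 hUh2 hUh3
  have hNY1 : ‖Ph * Z1ᵀ * Uh1‖ ≤ tau := by
    refine (Stmt14.norm_mul_le' _ _).trans ?_
    exact (mul_le_of_le_one_right (norm_nonneg _) (orthoCols_norm_le hUh1)).trans hPhZt
  have hs1' : ‖(1 - U1 * U1ᵀ) * Uh1‖ = s1 := by
    rw [hs1def]; exact norm_proj_compl_comm hUh1 hU1
  have hNY2 : ‖Ph * Z1ᵀ * Uh1‖ ≤ tau * s1 + (tau * eta + beta) := by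
    have hid : Ph * Z1ᵀ * Uh1 = Ph * Z1ᵀ * ((1 - U1 * U1ᵀ) * Uh1)
        + (Ph * Z1ᵀ * U1) * (U1ᵀ * Uh1) := by
      simp only [Matrix.mul_sub, Matrix.sub_mul, Matrix.mul_one, Matrix.one_mul,
        Matrix.mul_assoc]
      abel
    rw [hid]
    refine (norm_add_le _ _).trans (add_le_add ?_ ?_)
    · refine (Stmt14.norm_mul_le' _ _).trans ?_
      rw [hs1']
      exact mul_le_mul_of_nonneg_right hPhZt hs10
    · refine (Stmt14.norm_mul_le' _ _).trans ?_
      have h1 : ‖Ph * Z1ᵀ * U1‖ ≤ tau * eta + beta := by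
        have heq : Ph * Z1ᵀ * U1 = (U1ᵀ * Z1 * Ph)ᵀ := by
          rw [Matrix.transpose_mul, Matrix.transpose_mul, Matrix.transpose_transpose, hPhT,
            Matrix.mul_assoc]
        rw [heq, Stmt14.norm_transpose]
        exact hK1
      have h2 : ‖U1ᵀ * Uh1‖ ≤ 1 := by
        refine (Stmt14.norm_mul_le' _ _).trans ?_
        refine mul_le_one₀ ?_ (norm_nonneg _) (orthoCols_norm_le hUh1)
        rw [Stmt14.norm_transpose]; exact orthoCols_norm_le hU1
      calc ‖Ph * Z1ᵀ * U1‖ * ‖U1ᵀ * Uh1‖ ≤ (tau * eta + beta) * 1 :=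
            mul_le_mul h1 h2 (norm_nonneg _) htaueb0
      _ = tau * eta + beta := mul_one _
  set R : Matrix (Fin p₂ × Fin p₃) (Fin r₁) ℝ := Z1ᵀ * (Uh1 * (Lh⁻¹ * Lh⁻¹)) with hR
  set Y : Matrix (Fin p₂ × Fin p₃) (Fin r₁) ℝ := Ph * R with hY
  have hYnorm1 : ‖Y‖ ≤ tau * (4 / lam ^ 2) := by
    have heq : Y = (Ph * Z1ᵀ * Uh1) * (Lh⁻¹ * Lh⁻¹) := by
      rw [hY, hR]; simp only [Matrix.mul_assoc]
    rw [heq]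
    exact (Stmt14.norm_mul_le' _ _).trans (mul_le_mul hNY1 hL2 (norm_nonneg _) htau0)
  have hYnorm2 : ‖Y‖ ≤ (tau * s1 + (tau * eta + beta)) * (4 / lam ^ 2) := by
    have heq : Y = (Ph * Z1ᵀ * Uh1) * (Lh⁻¹ * Lh⁻¹) := by
      rw [hY, hR]; simp only [Matrix.mul_assoc]
    rw [heq]
    exact (Stmt14.norm_mul_le' _ _).trans (mul_le_mul hNY2 hL2 (norm_nonneg _)
      (add_nonneg (mul_nonneg htau0 hs10) htaueb0))
  have hsplit : (1 - U1 * U1ᵀ) * Z1 * Ph * Z1ᵀ * Uh1 * (Lh⁻¹ * Lh⁻¹)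
      = U1 * (-((U1ᵀ * Z1 * Ph) * Y)) + (Z1 * ((1 - Pt) * Ph)) * Y + (Z1 * Pt) * Y := by
    have hPh2 : ∀ X : Matrix (Fin p₂ × Fin p₃) (Fin r₁) ℝ, Ph * (Ph * X) = Ph * X := fun X => by
      rw [← Matrix.mul_assoc, hPhPh]
    rw [hY, hR]
    simp only [Matrix.sub_mul, Matrix.mul_sub, Matrix.one_mul, Matrix.mul_one,
      Matrix.neg_mul, Matrix.mul_neg, Matrix.mul_assoc, hPh2]
    abel
  have hrow : (((1 - U1 * U1ᵀ) * Z1 * Ph * Z1ᵀ * Uh1 * (Lh⁻¹ * Lh⁻¹) :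
        Matrix (Fin p₁) (Fin r₁) ℝ)) m
      = ((U1 * (-((U1ᵀ * Z1 * Ph) * Y)) : Matrix (Fin p₁) (Fin r₁) ℝ)) m
        + (((Z1 * ((1 - Pt) * Ph)) * Y : Matrix (Fin p₁) (Fin r₁) ℝ)) m
        + (((Z1 * Pt) * Y : Matrix (Fin p₁) (Fin r₁) ℝ)) m := by
    rw [hsplit]; rfl
  rw [hrow]
  have hbA : enorm2 (((U1 * (-((U1ᵀ * Z1 * Ph) * Y)) : Matrix (Fin p₁) (Fin r₁) ℝ)) m)
      ≤ twoInf U1 * ((tau * eta + beta) * (tau * (4 / lam ^ 2))) := by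
    refine (row_mul_le _ _ _).trans ?_
    refine mul_le_mul (row_le_twoInf U1 m) ?_ (norm_nonneg _) htw0
    rw [norm_neg]
    exact (Stmt14.norm_mul_le' _ _).trans
      (mul_le_mul hK1 hYnorm1 (norm_nonneg _) htaueb0)
  have hbB : enorm2 ((((Z1 * ((1 - Pt) * Ph)) * Y : Matrix (Fin p₁) (Fin r₁) ℝ)) m)
      ≤ (tau * etat) * (tau * (4 / lam ^ 2)) := by
    refine (row_le_norm _ _).trans ?_
    refine (Stmt14.norm_mul_le' _ _).trans ?_
    refine mul_le_mul ?_ hYnorm1 (norm_nonneg _) (mul_nonneg htau0 hetat0)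
    rw [hPt, hPh, hetatdef, htaudef]
    exact key2 Z1 Ut2 Ut3 Uh2 Uh3 hUt2 hUt3 hUh2 hUh3
  have hbC : enorm2 ((((Z1 * Pt) * Y : Matrix (Fin p₁) (Fin r₁) ℝ)) m)
      ≤ xi * ((tau * s1 + (tau * eta + beta)) * (4 / lam ^ 2)) := by
    refine (row_mul_le _ _ _).trans ?_
    refine mul_le_mul ?_ hYnorm2 (norm_nonneg _) hxi0
    rw [hxidef]
  have htri : enorm2 (((U1 * (-((U1ᵀ * Z1 * Ph) * Y)) : Matrix (Fin p₁) (Fin r₁) ℝ)) m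
        + (((Z1 * ((1 - Pt) * Ph)) * Y : Matrix (Fin p₁) (Fin r₁) ℝ)) m
        + (((Z1 * Pt) * Y : Matrix (Fin p₁) (Fin r₁) ℝ)) m)
      ≤ enorm2 (((U1 * (-((U1ᵀ * Z1 * Ph) * Y)) : Matrix (Fin p₁) (Fin r₁) ℝ)) m)
        + enorm2 ((((Z1 * ((1 - Pt) * Ph)) * Y : Matrix (Fin p₁) (Fin r₁) ℝ)) m)
        + enorm2 ((((Z1 * Pt) * Y : Matrix (Fin p₁) (Fin r₁) ℝ)) m) :=
    (enorm2_add_le _ _).trans (add_le_add_left (enorm2_add_le _ _) _)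
  refine htri.trans ?_
  have hB' : (tau * etat) * (tau * (4 / lam ^ 2)) ≤ 16 / lam ^ 2 * tau ^ 2 * etat := by
    have h2 : (4:ℝ) / lam ^ 2 ≤ 16 / lam ^ 2 := by
      rw [div_le_div_iff_of_pos_right hlamsq]; norm_num
    calc (tau * etat) * (tau * (4 / lam ^ 2)) = 4 / lam ^ 2 * (tau ^ 2 * etat) := by ring
    _ ≤ 16 / lam ^ 2 * (tau ^ 2 * etat) := mul_le_mul_of_nonneg_right h2
          (mul_nonneg (sq_nonneg tau) hetat0)
    _ = 16 / lam ^ 2 * tau ^ 2 * etat := by ring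
  have hAeq : twoInf U1 * ((tau * eta + beta) * (tau * (4 / lam ^ 2)))
      = 4 / lam ^ 2 * twoInf U1 * tau * (tau * eta + beta) := by ring
  have hCeq : xi * ((tau * s1 + (tau * eta + beta)) * (4 / lam ^ 2))
      = 4 / lam ^ 2 * xi * (tau * s1 + tau * eta + beta) := by ring
  linarith [hbA, hbB, hbC, hB']


end
end

section
/- Membership recovery perturbation bound. Let Π ∈ ℝ^{p×r} be a membership matrix (nonnegative entries, each row summing to 1), let B ∈ ℝ^{r×r} be invertible, and set U := Π·B. Let Û ∈ ℝ^{p×r}, W ∈ O(r), let 𝒫 ∈ ℝ^{r×r} be a permutation matrix, and let B̂ ∈ ℝ^{r×r} be invertible. If ‖Û − U·W‖_{2,∞} ≤ ε and ‖B̂ − 𝒫ᵀ·B·W‖_{2,∞} ≤ δ, then ‖Û·B̂^{-1} − Π·𝒫‖_{2,∞} ≤ (ε + δ)·‖B̂^{-1}‖. -/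
open Matrix
open scoped BigOperators Kronecker

noncomputable section

/-- A membership matrix: nonnegative entries, rows summing to one. -/
def IsMembership {p r : ℕ} (P : Matrix (Fin p) (Fin r) ℝ) : Prop :=
  (∀ i l, 0 ≤ P i l) ∧ ∀ i, ∑ l, P i l = 1

/-- A permutation matrix. -/
def IsPermMatrix {r : ℕ} (P : Matrix (Fin r) (Fin r) ℝ) : Prop :=
  ∃ e : Equiv.Perm (Fin r), ∀ i j, P i j = if j = e i then 1 else 0

/- ### Auxiliary lemmas -/

lemma enorm2_eq {n : Type*} [Fintype n] (v : n → ℝ) :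
    enorm2 v = ‖(WithLp.equiv 2 (n → ℝ)).symm v‖ := by
  rw [EuclideanSpace.norm_eq]; simp [enorm2, Real.norm_eq_abs, sq_abs]

lemma enorm2_nonneg {n : Type*} [Fintype n] (v : n → ℝ) : 0 ≤ enorm2 v :=
  Real.sqrt_nonneg _

lemma enorm2_add_le {n : Type*} [Fintype n] (u v : n → ℝ) :
    enorm2 (u + v) ≤ enorm2 u + enorm2 v := by
  rw [enorm2_eq, enorm2_eq, enorm2_eq]; exact norm_add_le _ _

lemma enorm2_smul {n : Type*} [Fintype n] (c : ℝ) (v : n → ℝ) :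
    enorm2 (c • v) = |c| * enorm2 v := by
  rw [enorm2_eq, enorm2_eq]
  have h : (WithLp.equiv 2 (n → ℝ)).symm (c • v)
      = c • (WithLp.equiv 2 (n → ℝ)).symm v := rfl
  rw [h, norm_smul, Real.norm_eq_abs]

lemma enorm2_cs {n : Type*} [Fintype n] (u v : n → ℝ) :
    ∑ i, u i * v i ≤ enorm2 u * enorm2 v := by
  rw [enorm2_eq, enorm2_eq]
  have := real_inner_le_norm ((WithLp.equiv 2 (n → ℝ)).symm u)
    ((WithLp.equiv 2 (n → ℝ)).symm v)
  simpa [EuclideanSpace.inner_eq_star_dotProduct, dotProduct, mul_comm] using this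

lemma enorm2_sum_smul_le {n ι : Type*} [Fintype n] [Fintype ι]
    (w : ι → ℝ) (hw : ∀ k, 0 ≤ w k) (v : ι → n → ℝ) :
    enorm2 (∑ k, w k • v k) ≤ ∑ k, w k * enorm2 (v k) := by
  rw [enorm2_eq]
  have h : (WithLp.equiv 2 (n → ℝ)).symm (∑ k, w k • v k)
      = ∑ k, w k • (WithLp.equiv 2 (n → ℝ)).symm (v k) := by
    simp [WithLp.toLp_sum]
  rw [h]
  refine (norm_sum_le _ _).trans (Finset.sum_le_sum fun k _ => ?_)
  rw [norm_smul, Real.norm_eq_abs, abs_of_nonneg (hw k), enorm2_eq]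

lemma spec_bddAbove {m n : Type*} [Fintype m] [Fintype n] (M : Matrix m n ℝ) :
    BddAbove {c | ∃ v : n → ℝ, enorm2 v ≤ 1 ∧ c = enorm2 (M.mulVec v)} := by
  refine ⟨Real.sqrt (∑ i, ∑ j, (M i j) ^ 2), ?_⟩
  rintro c ⟨v, hv, rfl⟩
  rw [enorm2]
  apply Real.sqrt_le_sqrt
  have hv2 : ∑ j, (v j) ^ 2 ≤ 1 := by
    have h1 : Real.sqrt (∑ j, (v j) ^ 2) ≤ 1 := hv
    have h0 : (0:ℝ) ≤ ∑ j, (v j) ^ 2 := Finset.sum_nonneg fun j _ => sq_nonneg (v j)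
    nlinarith [Real.sq_sqrt h0, Real.sqrt_nonneg (∑ j, (v j) ^ 2)]
  calc ∑ i, (M.mulVec v i) ^ 2
      ≤ ∑ i, (∑ j, (M i j) ^ 2) * (∑ j, (v j) ^ 2) := by
        refine Finset.sum_le_sum fun i _ => ?_
        exact Finset.sum_mul_sq_le_sq_mul_sq Finset.univ (M i) v
    _ ≤ ∑ i, ∑ j, (M i j) ^ 2 := by
        refine Finset.sum_le_sum fun i _ => ?_
        have h0 : 0 ≤ ∑ j, (M i j) ^ 2 := Finset.sum_nonneg fun j _ => sq_nonneg _
        nlinarith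

lemma spec_nonneg {m n : Type*} [Fintype m] [Fintype n] (M : Matrix m n ℝ) :
    0 ≤ spec M := by
  have h0 : (0 : ℝ) ∈ {c | ∃ v : n → ℝ, enorm2 v ≤ 1 ∧ c = enorm2 (M.mulVec v)} := by
    refine ⟨0, ?_, ?_⟩ <;> simp [enorm2]
  exact le_csSup (spec_bddAbove M) h0

lemma le_spec {m n : Type*} [Fintype m] [Fintype n] (M : Matrix m n ℝ)
    (v : n → ℝ) (hv : enorm2 v ≤ 1) : enorm2 (M.mulVec v) ≤ spec M :=
  le_csSup (spec_bddAbove M) ⟨v, hv, rfl⟩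

lemma enorm2_eq_zero {n : Type*} [Fintype n] (v : n → ℝ) (h : enorm2 v = 0) :
    v = 0 := by
  rw [enorm2_eq] at h
  have := norm_eq_zero.mp h
  funext j
  exact congrFun (congrArg WithLp.ofLp this) j

lemma spec_mulVec_le {m n : Type*} [Fintype m] [Fintype n] (M : Matrix m n ℝ)
    (v : n → ℝ) : enorm2 (M.mulVec v) ≤ spec M * enorm2 v := by
  rcases eq_or_lt_of_le (enorm2_nonneg v) with h | h
  · rw [enorm2_eq_zero v h.symm]
    simp [enorm2, Matrix.mulVec_zero, ← h]
  · set c := enorm2 v with hc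
    have hv1 : enorm2 (c⁻¹ • v) = 1 := by
      rw [enorm2_smul, abs_of_pos (inv_pos.mpr h), ← hc]
      field_simp
    have := le_spec M (c⁻¹ • v) (le_of_eq hv1)
    have hmv : M.mulVec v = c • M.mulVec (c⁻¹ • v) := by
      rw [Matrix.mulVec_smul, smul_smul]
      field_simp
      rw [one_smul]
    rw [hmv, enorm2_smul, abs_of_pos h]
    calc c * enorm2 (M.mulVec (c⁻¹ • v)) ≤ c * spec M :=
          mul_le_mul_of_nonneg_left this h.le
      _ = spec M * c := mul_comm _ _

lemma inner_mulVec {m n : Type*} [Fintype m] [Fintype n] (M : Matrix m n ℝ)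
    (u : m → ℝ) (v : n → ℝ) :
    ∑ i, u i * M.mulVec v i = ∑ j, Mᵀ.mulVec u j * v j := by
  simp only [Matrix.mulVec, dotProduct, Matrix.transpose_apply,
    Finset.mul_sum, Finset.sum_mul]
  rw [Finset.sum_comm]
  exact Finset.sum_congr rfl fun j _ => Finset.sum_congr rfl fun i _ => by ring

lemma spec_transpose_le {m n : Type*} [Fintype m] [Fintype n] (M : Matrix m n ℝ) :
    spec Mᵀ ≤ spec M := by
  apply Real.sSup_le _ (spec_nonneg M)
  rintro c ⟨u, hu, rfl⟩
  set t := enorm2 (Mᵀ.mulVec u) with ht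
  have ht0 : 0 ≤ t := enorm2_nonneg _
  rcases eq_or_lt_of_le ht0 with h | h
  · rw [← h]; exact spec_nonneg M
  · have key : t ^ 2 ≤ spec M * t := by
      have h1 : t ^ 2 = ∑ j, (Mᵀ.mulVec u j) ^ 2 := by
        rw [ht, enorm2, Real.sq_sqrt (Finset.sum_nonneg fun j _ => sq_nonneg _)]
      have h2 : ∑ j, (Mᵀ.mulVec u j) ^ 2 = ∑ i, u i * M.mulVec (Mᵀ.mulVec u) i := by
        rw [inner_mulVec M u (Mᵀ.mulVec u)]
        exact Finset.sum_congr rfl fun j _ => (sq (Mᵀ.mulVec u j)).symm ▸ by ring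
      have h3 : ∑ i, u i * M.mulVec (Mᵀ.mulVec u) i
          ≤ enorm2 u * enorm2 (M.mulVec (Mᵀ.mulVec u)) := enorm2_cs _ _
      have h4 : enorm2 (M.mulVec (Mᵀ.mulVec u)) ≤ spec M * t := spec_mulVec_le M _
      have h5 : enorm2 u * enorm2 (M.mulVec (Mᵀ.mulVec u))
          ≤ 1 * (spec M * t) := by
        apply mul_le_mul hu h4 (enorm2_nonneg _)
        norm_num
      rw [h1, h2] at *
      linarith
    nlinarith

lemma spec_transpose {m n : Type*} [Fintype m] [Fintype n] (M : Matrix m n ℝ) :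
    spec Mᵀ = spec M := by
  refine le_antisymm (spec_transpose_le M) ?_
  have := spec_transpose_le Mᵀ
  rwa [Matrix.transpose_transpose] at this

lemma twoInf_bddAbove {m n : Type*} [Fintype m] [Fintype n] (M : Matrix m n ℝ) :
    BddAbove {c | ∃ i, c = enorm2 (M i)} := by
  have : {c | ∃ i, c = enorm2 (M i)} = Set.range (fun i => enorm2 (M i)) := by
    ext c; simp [eq_comm]
  rw [this]
  exact (Set.finite_range _).bddAbove

lemma row_le_twoInf {m n : Type*} [Fintype m] [Fintype n] (M : Matrix m n ℝ)
    (i : m) : enorm2 (M i) ≤ twoInf M :=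
  le_csSup (twoInf_bddAbove M) ⟨i, rfl⟩

lemma twoInf_nonneg {m n : Type*} [Fintype m] [Fintype n] (M : Matrix m n ℝ) :
    0 ≤ twoInf M := by
  by_cases hm : Nonempty m
  · obtain ⟨i⟩ := hm
    exact (enorm2_nonneg (M i)).trans (row_le_twoInf M i)
  · have : {c | ∃ i, c = enorm2 (M i)} = ∅ := by
      ext c; simp only [Set.mem_setOf_eq, Set.mem_empty_iff_false, iff_false]
      rintro ⟨i, _⟩; exact hm ⟨i⟩
    rw [twoInf, this, Real.sSup_empty]

lemma mul_row {m n k : Type*} [Fintype m] [Fintype n] [Fintype k]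
    (M : Matrix m n ℝ) (A : Matrix n k ℝ) (i : m) :
    (M * A) i = Aᵀ.mulVec (M i) := by
  funext j
  simp [Matrix.mul_apply, Matrix.mulVec, dotProduct, mul_comm]

lemma perm_mul_transpose {r : ℕ} (P : Matrix (Fin r) (Fin r) ℝ)
    (hP : IsPermMatrix P) : P * Pᵀ = 1 := by
  obtain ⟨e, he⟩ := hP
  ext i j
  simp only [Matrix.mul_apply, Matrix.transpose_apply, he, Matrix.one_apply]
  simp only [ite_mul, one_mul, zero_mul]
  rw [Finset.sum_ite_eq' Finset.univ (e i) (fun k => if k = e j then (1:ℝ) else 0)]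
  simp [e.injective.eq_iff]

/-- membership recovery perturbation bound. -/
theorem stmt18 {p r : ℕ} (Pi : Matrix (Fin p) (Fin r) ℝ) (hPi : IsMembership Pi)
    (B : Matrix (Fin r) (Fin r) ℝ) (hB : IsUnit B.det)
    (Uh : Matrix (Fin p) (Fin r) ℝ)
    (W : Matrix (Fin r) (Fin r) ℝ) (hW : Wᵀ * W = 1)
    (P : Matrix (Fin r) (Fin r) ℝ) (hP : IsPermMatrix P)
    (Bh : Matrix (Fin r) (Fin r) ℝ) (hBh : IsUnit Bh.det)
    (ε δ : ℝ)
    (h1 : twoInf (Uh - (Pi * B) * W) ≤ ε)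
    (h2 : twoInf (Bh - Pᵀ * B * W) ≤ δ) :
    twoInf (Uh * Bh⁻¹ - Pi * P) ≤ (ε + δ) * spec Bh⁻¹ := by
  have hε : 0 ≤ ε := (twoInf_nonneg _).trans h1
  have hδ : 0 ≤ δ := (twoInf_nonneg _).trans h2
  set E1 := Uh - (Pi * B) * W with hE1
  set E2 := Bh - Pᵀ * B * W with hE2
  -- key algebraic identity
  have hkey : Uh * Bh⁻¹ - Pi * P = E1 * Bh⁻¹ - (Pi * P) * E2 * Bh⁻¹ := by
    have hPPt : P * Pᵀ = 1 := perm_mul_transpose P hP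
    have hBhinv : Bh * Bh⁻¹ = 1 := Matrix.mul_nonsing_inv Bh hBh
    have : (Pi * P) * E2 = Pi * P * Bh - (Pi * B) * W := by
      rw [hE2, Matrix.mul_sub]
      congr 1
      calc Pi * P * (Pᵀ * B * W) = Pi * (P * Pᵀ) * B * W := by
            simp only [Matrix.mul_assoc]
        _ = (Pi * B) * W := by rw [hPPt, Matrix.mul_one, Matrix.mul_assoc]
    rw [this, hE1]
    rw [Matrix.sub_mul, Matrix.sub_mul, Matrix.mul_assoc (Pi * P) Bh Bh⁻¹, hBhinv,
      Matrix.mul_one]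
    abel
  apply Real.sSup_le _ (mul_nonneg (add_nonneg hε hδ) (spec_nonneg _))
  rintro c ⟨i, rfl⟩
  rw [hkey]
  -- row decomposition
  have hrow : (E1 * Bh⁻¹ - (Pi * P) * E2 * Bh⁻¹) i
      = (Bh⁻¹)ᵀ.mulVec (E1 i) + (Bh⁻¹)ᵀ.mulVec (-(((Pi * P) * E2) i)) := by
    have hA : (E1 * Bh⁻¹) i = (Bh⁻¹)ᵀ.mulVec (E1 i) := mul_row _ _ i
    have hBrow : ((Pi * P) * E2 * Bh⁻¹) i = (Bh⁻¹)ᵀ.mulVec (((Pi * P) * E2) i) :=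
      mul_row _ _ i
    funext j
    simp [Matrix.sub_apply, hA, hBrow, Matrix.mulVec_neg, sub_eq_add_neg]
  rw [hrow]
  have hT := spec_transpose (Bh⁻¹)
  -- bound the first term
  have hb1 : enorm2 ((Bh⁻¹)ᵀ.mulVec (E1 i)) ≤ spec Bh⁻¹ * ε := by
    calc enorm2 ((Bh⁻¹)ᵀ.mulVec (E1 i)) ≤ spec (Bh⁻¹)ᵀ * enorm2 (E1 i) :=
          spec_mulVec_le _ _
      _ ≤ spec Bh⁻¹ * ε := by
          rw [hT]
          exact mul_le_mul_of_nonneg_left ((row_le_twoInf E1 i).trans h1)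
            (spec_nonneg _)
  -- bound the second term: row of Pi*P is a convex combination
  have hb2 : enorm2 ((Bh⁻¹)ᵀ.mulVec (-(((Pi * P) * E2) i))) ≤ spec Bh⁻¹ * δ := by
    have hconv : enorm2 (((Pi * P) * E2) i) ≤ δ := by
      set w : Fin r → ℝ := (Pi * P) i with hwdef
      have hw0 : ∀ k, 0 ≤ w k := by
        intro k
        obtain ⟨e, he⟩ := hP
        simp only [hwdef, Matrix.mul_apply]
        apply Finset.sum_nonneg
        intro l _
        rw [he]
        by_cases h : k = e l <;> simp [h, hPi.1 i l]
      have hw1 : ∑ k, w k = 1 := by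
        obtain ⟨e, he⟩ := hP
        simp only [hwdef, Matrix.mul_apply]
        rw [Finset.sum_comm]
        calc ∑ l, ∑ k, Pi i l * P l k = ∑ l, Pi i l * ∑ k, P l k := by
              simp [Finset.mul_sum]
          _ = 1 := by
              have : ∀ l, ∑ k, P l k = 1 := by
                intro l
                simp [he, Finset.sum_ite_eq' Finset.univ (e l) (fun _ => (1:ℝ))]
              simp only [this, mul_one]
              exact hPi.2 i
      have hrow2 : ((Pi * P) * E2) i = ∑ k, w k • E2 k := by
        funext j
        rw [mul_row (Pi * P) E2 i]
        simp [Matrix.mulVec, dotProduct, Matrix.transpose_apply,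
          Finset.sum_apply, mul_comm]
        rfl
      rw [hrow2]
      calc enorm2 (∑ k, w k • E2 k) ≤ ∑ k, w k * enorm2 (E2 k) :=
            enorm2_sum_smul_le w hw0 _
        _ ≤ ∑ k, w k * δ := by
            refine Finset.sum_le_sum fun k _ => ?_
            exact mul_le_mul_of_nonneg_left ((row_le_twoInf E2 k).trans h2) (hw0 k)
        _ = δ := by rw [← Finset.sum_mul, hw1, one_mul]
    have hneg : enorm2 (-(((Pi * P) * E2) i)) = enorm2 (((Pi * P) * E2) i) := by
      have : -(((Pi * P) * E2) i) = (-1 : ℝ) • (((Pi * P) * E2) i) := by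
        funext j; simp
      rw [this, enorm2_smul]; norm_num
    calc enorm2 ((Bh⁻¹)ᵀ.mulVec (-(((Pi * P) * E2) i)))
        ≤ spec (Bh⁻¹)ᵀ * enorm2 (-(((Pi * P) * E2) i)) := spec_mulVec_le _ _
      _ ≤ spec Bh⁻¹ * δ := by
          rw [hT, hneg]
          exact mul_le_mul_of_nonneg_left hconv (spec_nonneg _)
  calc enorm2 ((Bh⁻¹)ᵀ.mulVec (E1 i) + (Bh⁻¹)ᵀ.mulVec (-(((Pi * P) * E2) i)))
      ≤ enorm2 ((Bh⁻¹)ᵀ.mulVec (E1 i))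
        + enorm2 ((Bh⁻¹)ᵀ.mulVec (-(((Pi * P) * E2) i))) := enorm2_add_le _ _
    _ ≤ spec Bh⁻¹ * ε + spec Bh⁻¹ * δ := add_le_add hb1 hb2
    _ = (ε + δ) * spec Bh⁻¹ := by ring

end
end
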